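/- arXiv:1910.05060 — 3 statements merged into one kernel-verified Lean document; each statement's English description precedes it below -/
import Mathlib

section
/- For every n ∈ ℕ, the law η_n of the nonlinear chain equals the conditional law of the killed Euler chain given survival: η_n = Law(Z̃_n | T̃ > nγ). -/
set_option linter.unusedSectionVars false
set_option maxHeartbeats 1000000


open MeasureTheory ProbabilityTheory Real Filter
open scoped ENNReal NNReal BigOperators

noncomputable section

/-- The flat `d`-dimensional torus. -/
abbrev Torus (d : ℕ) : Type := Fin d → AddCircle (1 : ℝ)

/-- Canonical projection from `ℝ^d` to the torus. -/
def Torus.proj {d : ℕ} (v : Fin d → ℝ) : Torus d := fun i => (v i : AddCircle (1 : ℝ))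

/-- The geodesic (Euclidean) distance on the torus. -/
def tdist {d : ℕ} (x y : Torus d) : ℝ := Real.sqrt (∑ i, (dist (x i) (y i)) ^ 2)

/-- The corresponding `ℓ²` distance on `(𝕋^d)^N`. -/
def tdistN {d N : ℕ} (x y : Fin N → Torus d) : ℝ := Real.sqrt (∑ i, (tdist (x i) (y i)) ^ 2)

/-- `b` is a `C¹` vector field on the torus: its periodic lift is `C¹`. -/
def IsC1Drift {d : ℕ} (b : Torus d → Fin d → ℝ) : Prop :=
  ContDiff ℝ 1 (fun v : Fin d → ℝ => b (Torus.proj v))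

/-- `λ` is Lipschitz with constant `L` for the geodesic distance. -/
def LipDrift {d : ℕ} (L : ℝ) (lam : Torus d → ℝ) : Prop :=
  ∀ x y, |lam x - lam y| ≤ L * tdist x y

/-- The standard Gaussian distribution `N(0, I_d)` on `ℝ^d`. -/
def stdGaussian (d : ℕ) : Measure (Fin d → ℝ) := Measure.pi fun _ => gaussianReal 0 1

/-- The exponential distribution `E(1)` on `ℝ`. -/
def expLaw : Measure ℝ := volume.withDensity (exponentialPDF 1)

/-- The uniform distribution on `[0,1]`. -/
def unifLaw : Measure ℝ := volume.restrict (Set.Icc (0 : ℝ) 1)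

/-- The Euler–Maruyama transition kernel `K`:
`K(x,·)` is the law of `x + γ b(x) + √γ G` modulo `ℤ^d`, `G ~ N(0, I_d)`. -/
def eulerK {d : ℕ} (b : Torus d → Fin d → ℝ) (γ : ℝ) (x : Torus d) : Measure (Torus d) :=
  (stdGaussian d).map (fun g => x + Torus.proj (fun i => γ * b x i + Real.sqrt γ * g i))

/-- The killing probability at `z`: `p(z) = 1 - exp(-γ λ(z))`. -/
def pkill {d : ℕ} (lam : Torus d → ℝ) (γ : ℝ) (z : Torus d) : ℝ :=
  1 - Real.exp (-(γ * lam z))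

/-- The rebirth kernel `Q_μ`: `Q_μ(x,·)` is the law of `X_H` where `X₀ ~ K(x,·)`,
`X_k ~ μK` for `k ≥ 1`, `U_k ~ U([0,1])` all independent and
`H = inf {k | U_k ≥ p(X_k)}`.  It is given by the explicit formula
`Q_μ f (x) = K[f(1-p)](x) + ∑_{k ≥ 1} μK[f(1-p)] (μK p)^(k-1) K p(x)`. -/
def Qker {d : ℕ} (b : Torus d → Fin d → ℝ) (lam : Torus d → ℝ) (γ : ℝ)
    (μ : Measure (Torus d)) (x : Torus d) : Measure (Torus d) :=
  (eulerK b γ x).withDensity (fun z => ENNReal.ofReal (1 - pkill lam γ z))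
    + ((∫⁻ z, ENNReal.ofReal (pkill lam γ z) ∂(eulerK b γ x))
        * ∑' k : ℕ, (∫⁻ z, ENNReal.ofReal (pkill lam γ z) ∂(μ.bind (eulerK b γ))) ^ k)
      • ((μ.bind (eulerK b γ)).withDensity (fun z => ENNReal.ofReal (1 - pkill lam γ z)))

/-- The nonlinear chain of laws `η_{n+1} = η_n Q_{η_n}`. -/
def etaChain {d : ℕ} (b : Torus d → Fin d → ℝ) (lam : Torus d → ℝ) (γ : ℝ)
    (η0 : Measure (Torus d)) : ℕ → Measure (Torus d)
  | 0 => η0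
  | n + 1 => (etaChain b lam γ η0 n).bind (Qker b lam γ (etaChain b lam γ η0 n))

/-- The empirical measure `π(x) = N⁻¹ ∑ δ_{x_i}`. -/
def emp {d N : ℕ} (x : Fin N → Torus d) : Measure (Torus d) :=
  (N : ℝ≥0∞)⁻¹ • ∑ i, Measure.dirac (x i)

/-- The mean-field particle kernel `R_{N,γ}(x,·) = ⊗_i Q_{π(x)}(x_i,·)`. -/
def Rker {d : ℕ} (b : Torus d → Fin d → ℝ) (lam : Torus d → ℝ) (γ : ℝ) {N : ℕ}
    (x : Fin N → Torus d) : Measure (Fin N → Torus d) :=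
  Measure.pi fun i => Qker b lam γ (emp x) (x i)

/-- Iterated action of a kernel on a measure: `μ ↦ μ R^m`. -/
def iterK {E : Type*} [MeasurableSpace E] (R : E → Measure E) : ℕ → Measure E → Measure E
  | 0, μ => μ
  | m + 1, μ => (iterK R m μ).bind R

/-- The set of couplings of `μ` and `ν`. -/
def Coupling {E : Type*} [MeasurableSpace E] (μ ν : Measure E) : Set (Measure (E × E)) :=
  {P | IsProbabilityMeasure P ∧ P.map Prod.fst = μ ∧ P.map Prod.snd = ν}

/-- The Wasserstein distance associated to a cost `ρ`:
`W_ρ(μ,ν) = inf { E[ρ(X,Y)] : X ~ μ, Y ~ ν }`. -/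
def Wass {E : Type*} [MeasurableSpace E] (ρ : E → E → ℝ) (μ ν : Measure E) : ℝ :=
  sInf ((fun P : Measure (E × E) => ∫ z, ρ z.1 z.2 ∂P) '' Coupling μ ν)

/-- The distance `ρ(x,y) = (1 - e^{-a|x-y|})/a`. -/
def rho {d : ℕ} (a : ℝ) (x y : Torus d) : ℝ := (1 - Real.exp (-a * tdist x y)) / a

/-- The distance `ρ_N(x,y) = ∑_i ρ(x_i,y_i)` on `(𝕋^d)^N`. -/
def rhoN {d : ℕ} (a : ℝ) {N : ℕ} (x y : Fin N → Torus d) : ℝ := ∑ i, rho a (x i) (y i)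

/-- The rate `α(N)` of convergence of empirical measures. -/
def alphaRate (d N : ℕ) : ℝ :=
  if d = 1 then (N : ℝ) ^ (-(1/2 : ℝ))
  else if d = 2 then (N : ℝ) ^ (-(1/2 : ℝ)) * Real.log (1 + (N : ℝ))
  else (N : ℝ) ^ (-(1 / (d : ℝ)))

/-- The contraction property of the Euler kernel in `W_ρ` (Majka's estimate). -/
def EulerContract {d : ℕ} (b : Torus d → Fin d → ℝ) (a c₁ γ₀ : ℝ) : Prop :=
  ∀ γ ∈ Set.Ioc (0 : ℝ) γ₀, ∀ μ ν : Measure (Torus d),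
    IsProbabilityMeasure μ → IsProbabilityMeasure ν →
      Wass (rho a) (μ.bind (eulerK b γ)) (ν.bind (eulerK b γ)) ≤ (1 - c₁ * γ) * Wass (rho a) μ ν

/-- κ = c₁ - c₂ L_λ e^{γ ‖λ‖_∞}. -/
def kap {d : ℕ} (lam : Torus d → ℝ) (c₁ c₂ L γ : ℝ) : ℝ :=
  c₁ - c₂ * L * Real.exp (γ * ⨆ z, lam z)

/-- The uniform contraction of the particle system `R_{N,γ}` in `W_{ρ_N}`. -/
def RContract {d : ℕ} (b : Torus d → Fin d → ℝ) (lam : Torus d → ℝ)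
    (a c₁ c₂ L γ₀ : ℝ) : Prop :=
  ∀ γ ∈ Set.Ioc (0 : ℝ) γ₀, ∀ N : ℕ, ∀ μ ν : Measure (Fin N → Torus d),
    IsProbabilityMeasure μ → IsProbabilityMeasure ν →
      Wass (rhoN a) (μ.bind (Rker b lam γ)) (ν.bind (Rker b lam γ))
        ≤ (1 - γ * kap lam c₁ c₂ L γ) * Wass (rhoN a) μ ν


/-- Index type for the sources of randomness of the killed Euler scheme:
`none ↦ E`, `some none ↦ Z₀`, `some (some n) ↦ G_n`. -/
def srcType (d : ℕ) : Option (Option ℕ) → Type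
  | none => ℝ
  | some none => Torus d
  | some (some _) => Fin d → ℝ

def srcMS (d : ℕ) : ∀ i, MeasurableSpace (srcType d i)
  | none => (inferInstance : MeasurableSpace ℝ)
  | some none => (inferInstance : MeasurableSpace (Torus d))
  | some (some _) => (inferInstance : MeasurableSpace (Fin d → ℝ))

def srcFam {d : ℕ} {Ω : Type*} (Z0 : Ω → Torus d) (G : ℕ → Ω → Fin d → ℝ) (Ev : Ω → ℝ) :
    ∀ i, Ω → srcType d i
  | none => Ev
  | some none => Z0
  | some (some n) => G n

/-- The death time `T̃ = inf { nγ : n ≥ 1, E ≤ γ ∑_{k=1}^n λ(Z̃_k) }` (`∞` if no such time). -/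
def deathTime {d : ℕ} {Ω : Type*} (lam : Torus d → ℝ) (γ : ℝ)
    (Z : ℕ → Ω → Torus d) (Ev : Ω → ℝ) (ω : Ω) : ℝ≥0∞ :=
  ⨅ (n : ℕ) (_ : 1 ≤ n ∧ Ev ω ≤ γ * ∑ k ∈ Finset.Icc 1 n, lam (Z k ω)),
    ENNReal.ofReal ((n : ℝ) * γ)

namespace NCE

variable {d : ℕ} {b : Torus d → Fin d → ℝ} {lam : Torus d → ℝ} {γ : ℝ}

/-- A measurable section of the projection to the torus. -/
def sec (x : Torus d) : Fin d → ℝ := fun i => (AddCircle.measurableEquivIoc 1 0 (x i) : ℝ)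

lemma proj_sec (x : Torus d) : Torus.proj (sec x) = x := by
  funext i
  exact (AddCircle.equivIoc 1 0).symm_apply_apply (x i)

lemma measurable_sec : Measurable (sec (d := d)) :=
  measurable_pi_lambda _ fun i =>
    (measurable_subtype_coe.comp (AddCircle.measurableEquivIoc 1 0).measurable).comp
      (measurable_pi_apply i)

lemma continuous_proj : Continuous (Torus.proj (d := d)) :=
  continuous_pi fun i => (AddCircle.continuous_mk' 1).comp (continuous_apply i)

lemma measurable_b (hb : IsC1Drift b) : Measurable b := by
  have h : b = (fun v : Fin d → ℝ => b (Torus.proj v)) ∘ sec := by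
    funext x; simp [Function.comp, proj_sec]
  rw [h]
  exact hb.continuous.measurable.comp measurable_sec

/-- One Euler step, as a function. -/
def step (b : Torus d → Fin d → ℝ) (γ : ℝ) (x : Torus d) (g : Fin d → ℝ) : Torus d :=
  x + Torus.proj (fun i => γ * b x i + Real.sqrt γ * g i)

lemma measurable_step (hb : IsC1Drift b) :
    Measurable (fun p : Torus d × (Fin d → ℝ) => step b γ p.1 p.2) := by
  apply Measurable.add measurable_fst
  apply (continuous_proj.measurable).comp
  apply measurable_pi_lambda _ fun i => ?_
  exact (((measurable_b hb).comp measurable_fst).eval.const_mul γ).add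
    (by fun_prop)

lemma eulerK_def (x : Torus d) :
    eulerK b γ x = (stdGaussian d).map (step b γ x) := rfl

instance : IsProbabilityMeasure (stdGaussian d) := by
  unfold _root_.stdGaussian; infer_instance

lemma measurable_step_right (hb : IsC1Drift b) (x : Torus d) :
    Measurable (step b γ x) :=
  (measurable_step hb).comp (measurable_const.prodMk measurable_id)

theorem isProb_eulerK (hb : IsC1Drift b) (x : Torus d) :
    IsProbabilityMeasure (eulerK b γ x) := by
  rw [eulerK_def]
  exact Measure.isProbabilityMeasure_map (measurable_step_right hb x).aemeasurable

lemma lintegral_eulerK (hb : IsC1Drift b) (x : Torus d) {f : Torus d → ℝ≥0∞}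
    (hf : Measurable f) :
    ∫⁻ y, f y ∂(eulerK b γ x) = ∫⁻ g, f (step b γ x g) ∂(stdGaussian d) := by
  rw [eulerK_def, lintegral_map hf (measurable_step_right hb x)]

lemma measurable_eulerK (hb : IsC1Drift b) : Measurable (eulerK (d := d) b γ) := by
  refine Measure.measurable_of_measurable_coe _ fun s hs => ?_
  have h1 : ∀ x, eulerK b γ x s
      = ∫⁻ g, s.indicator (fun _ => (1 : ℝ≥0∞)) (step b γ x g) ∂(stdGaussian d) := by
    intro x
    rw [eulerK_def, Measure.map_apply (measurable_step_right hb x) hs,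
      ← lintegral_indicator_one ((measurable_step_right hb x) hs)]
    congr 1
  simp_rw [h1]
  exact Measurable.lintegral_prod_right'
    ((measurable_one.indicator hs).comp (measurable_step hb))

lemma isProb_bind_eulerK (hb : IsC1Drift b) (μ : Measure (Torus d))
    [IsProbabilityMeasure μ] : IsProbabilityMeasure (μ.bind (eulerK b γ)) := by
  constructor
  rw [Measure.bind_apply MeasurableSet.univ (measurable_eulerK hb).aemeasurable]
  have : ∀ x : Torus d, eulerK b γ x Set.univ = 1 := fun x =>
    (isProb_eulerK hb x).measure_univ
  simp [this]


/-! ### The survival density -/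

def dens (lam : Torus d → ℝ) (γ : ℝ) (z : Torus d) : ℝ≥0∞ :=
  ENNReal.ofReal (Real.exp (-(γ * lam z)))

lemma one_sub_pkill (z : Torus d) : 1 - pkill lam γ z = Real.exp (-(γ * lam z)) := by
  simp [pkill]

lemma ofReal_one_sub_pkill :
    (fun z => ENNReal.ofReal (1 - pkill lam γ z)) = dens lam γ := by
  funext z; rw [one_sub_pkill]; rfl

lemma measurable_dens (hlamc : Continuous lam) : Measurable (dens lam γ) :=
  ENNReal.measurable_ofReal.comp (((continuous_const.mul hlamc).neg).rexp).measurable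

lemma measurable_opkill (hlamc : Continuous lam) :
    Measurable (fun z => ENNReal.ofReal (pkill lam γ z)) := by
  apply ENNReal.measurable_ofReal.comp
  exact (continuous_const.sub ((continuous_const.mul hlamc).neg).rexp).measurable

lemma dens_le_one (hlam0 : ∀ z, 0 ≤ lam z) (hγ : 0 ≤ γ) (z : Torus d) :
    dens lam γ z ≤ 1 := by
  rw [dens, ← ENNReal.ofReal_one]
  apply ENNReal.ofReal_le_ofReal
  rw [Real.exp_le_one_iff]
  simp only [neg_nonpos]
  exact mul_nonneg hγ (hlam0 z)

lemma opkill_add_dens (hlam0 : ∀ z, 0 ≤ lam z) (hγ : 0 ≤ γ) (z : Torus d) :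
    ENNReal.ofReal (pkill lam γ z) + dens lam γ z = 1 := by
  rw [dens, ← ENNReal.ofReal_add (by
      rw [pkill, sub_nonneg, Real.exp_le_one_iff]
      simp only [neg_nonpos]
      exact mul_nonneg hγ (hlam0 z)) (Real.exp_nonneg _)]
  rw [pkill]
  ring_nf
  exact ENNReal.ofReal_one

lemma exists_dens_lb (hlamc : Continuous lam) (hγ : 0 ≤ γ) :
    ∃ ε : ℝ≥0∞, 0 < ε ∧ ∀ z, ε ≤ dens lam γ z := by
  obtain ⟨zM, -, hzM⟩ := isCompact_univ.exists_isMaxOn (Set.univ_nonempty)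
    hlamc.continuousOn
  refine ⟨ENNReal.ofReal (Real.exp (-(γ * lam zM))), ?_, fun z => ?_⟩
  · exact ENNReal.ofReal_pos.mpr (Real.exp_pos _)
  · apply ENNReal.ofReal_le_ofReal
    apply Real.exp_le_exp.mpr
    apply neg_le_neg
    exact mul_le_mul_of_nonneg_left (hzM (Set.mem_univ z)) hγ

lemma measurable_Qker (hb : IsC1Drift b) (hlamc : Continuous lam)
    (μ : Measure (Torus d)) : Measurable (Qker b lam γ μ) := by
  refine Measure.measurable_of_measurable_coe _ fun s hs => ?_
  simp only [Qker, Measure.coe_add, Pi.add_apply, Measure.smul_apply, smul_eq_mul,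
    ofReal_one_sub_pkill, withDensity_apply _ hs, ← lintegral_indicator (hs) _]
  apply Measurable.add
  · exact (Measure.measurable_lintegral
      ((measurable_dens hlamc).indicator hs)).comp (measurable_eulerK hb)
  · apply Measurable.mul _ measurable_const
    apply Measurable.mul _ measurable_const
    exact (Measure.measurable_lintegral (measurable_opkill hlamc)).comp
      (measurable_eulerK hb)

lemma withDensity_dens_le (hlam0 : ∀ z, 0 ≤ lam z) (hγ : 0 ≤ γ)
    (ν : Measure (Torus d)) (s : Set (Torus d)) (hs : MeasurableSet s) :
    ν.withDensity (dens lam γ) s ≤ ν s := by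
  rw [withDensity_apply _ hs]
  calc ∫⁻ z in s, dens lam γ z ∂ν ≤ ∫⁻ _ in s, 1 ∂ν :=
        lintegral_mono fun z => dens_le_one hlam0 hγ z
    _ = ν s := by simp

lemma bind_Qker (hb : IsC1Drift b) (hlamc : Continuous lam) (hlam0 : ∀ z, 0 ≤ lam z)
    (hγ : 0 < γ) (μ : Measure (Torus d)) [IsProbabilityMeasure μ] :
    μ.bind (Qker b lam γ μ)
      = (∫⁻ z, dens lam γ z ∂(μ.bind (eulerK b γ)))⁻¹ •
          (μ.bind (eulerK b γ)).withDensity (dens lam γ) := by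
  have hν : IsProbabilityMeasure (μ.bind (eulerK b γ)) := isProb_bind_eulerK hb μ
  set ν := μ.bind (eulerK b γ) with hνdef
  set q1 := ∫⁻ z, dens lam γ z ∂ν with hq1def
  set q := ∫⁻ z, ENNReal.ofReal (pkill lam γ z) ∂ν with hqdef
  have hsum : q + q1 = 1 := by
    rw [hqdef, hq1def, ← lintegral_add_left (measurable_opkill hlamc)]
    simp only [opkill_add_dens hlam0 hγ.le]
    simp
  have hq1top : q1 ≠ ∞ := by
    intro h; rw [h] at hsum; simp at hsum
  have hqtop : q ≠ ∞ := by
    intro h; rw [h] at hsum; simp at hsum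
  have hq1pos : q1 ≠ 0 := by
    obtain ⟨ε, hε, hlb⟩ := exists_dens_lb (γ := γ) hlamc hγ.le
    have hle : ε ≤ q1 := by
      have h2 : ε * ν Set.univ ≤ q1 := by
        rw [← MeasureTheory.lintegral_const]
        exact lintegral_mono fun z => hlb z
      simpa using h2
    intro h
    rw [h] at hle
    exact hε.ne' (le_antisymm hle zero_le)
  have hgeom : (∑' k : ℕ, q ^ k) = q1⁻¹ := by
    rw [ENNReal.tsum_geometric]
    congr 1
    exact ENNReal.sub_eq_of_eq_add hqtop (by rw [← hsum, add_comm])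
  ext s hs
  rw [Measure.bind_apply hs (measurable_Qker hb hlamc μ).aemeasurable, Measure.smul_apply, smul_eq_mul]
  have hQapp : ∀ x, Qker b lam γ μ x s
      = (∫⁻ z, Set.indicator s (dens lam γ) z ∂(eulerK b γ x))
        + (∫⁻ z, ENNReal.ofReal (pkill lam γ z) ∂(eulerK b γ x)) * (q1⁻¹ * ν.withDensity (dens lam γ) s) := by
    intro x
    simp only [Qker, Measure.coe_add, Pi.add_apply, Measure.smul_apply, smul_eq_mul,
      ofReal_one_sub_pkill, ← hνdef, ← hqdef, hgeom]
    rw [withDensity_apply _ hs, lintegral_indicator hs]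
    ring
  simp only [hQapp]
  have hmeas1 : Measurable fun a : Torus d =>
      ∫⁻ z, Set.indicator s (dens lam γ) z ∂(eulerK b γ a) :=
    (Measure.measurable_lintegral ((measurable_dens hlamc).indicator hs)).comp
      (measurable_eulerK hb)
  rw [lintegral_add_left hmeas1]
  rw [lintegral_mul_const' _ _ (by
      exact ENNReal.mul_ne_top (ENNReal.inv_ne_top.mpr hq1pos)
        (lt_of_le_of_lt (withDensity_dens_le hlam0 hγ.le ν s hs)
          (measure_lt_top ν s)).ne)]
  rw [← Measure.lintegral_bind (measurable_eulerK hb).aemeasurable ((measurable_dens hlamc).indicator hs).aemeasurable,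
    ← Measure.lintegral_bind (measurable_eulerK hb).aemeasurable (measurable_opkill hlamc).aemeasurable]
  rw [← hνdef, ← hqdef]
  have hW : ν.withDensity (dens lam γ) s = ∫⁻ z, Set.indicator s (dens lam γ) z ∂ν := by
    rw [withDensity_apply _ hs, lintegral_indicator hs]
  rw [← hW]
  set W := ν.withDensity (dens lam γ) s with hWdef
  have hWtop : W ≠ ∞ :=
    (lt_of_le_of_lt (withDensity_dens_le hlam0 hγ.le ν s hs) (measure_lt_top ν s)).ne
  have hinv : q1⁻¹ = 1 + q * q1⁻¹ := by
    calc q1⁻¹ = (q1 + q) * q1⁻¹ := by rw [add_comm, hsum, one_mul]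
      _ = q1 * q1⁻¹ + q * q1⁻¹ := by rw [add_mul]
      _ = 1 + q * q1⁻¹ := by rw [ENNReal.mul_inv_cancel hq1pos hq1top]
  calc W + q * (q1⁻¹ * W) = (1 + q * q1⁻¹) * W := by ring
    _ = q1⁻¹ * W := by rw [← hinv]

end NCE

namespace NCE

/-! ### Properties of the exponential law -/

lemma expLaw_Iic (t : ℝ) :
    expLaw (Set.Iic t) = ENNReal.ofReal (if 0 ≤ t then 1 - Real.exp (-t) else 0) := by
  rw [expLaw, withDensity_apply _ measurableSet_Iic,
    lintegral_exponentialPDF_eq_antiDeriv zero_lt_one t]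
  simp

instance : IsProbabilityMeasure expLaw := by
  constructor
  rw [expLaw, withDensity_apply _ MeasurableSet.univ, setLIntegral_univ,
    lintegral_exponentialPDF_eq_one zero_lt_one]

lemma expLaw_Iic_zero : expLaw (Set.Iic 0) = 0 := by
  rw [expLaw_Iic]; simp

lemma expLaw_Ioi {t : ℝ} (ht : 0 ≤ t) :
    expLaw (Set.Ioi t) = ENNReal.ofReal (Real.exp (-t)) := by
  rw [← Set.compl_Iic, measure_compl measurableSet_Iic (measure_ne_top _ _), measure_univ,
    expLaw_Iic, if_pos ht, ← ENNReal.ofReal_one, ← ENNReal.ofReal_sub _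
      (sub_nonneg.mpr (Real.exp_le_one_iff.mpr (neg_nonpos.mpr ht)))]
  norm_num

/-! ### A Fubini-type lemma for independent random variables -/

lemma lintegral_indepFun {Ω α β : Type*} [MeasurableSpace Ω] [MeasurableSpace α]
    [MeasurableSpace β] {P : Measure Ω} [IsProbabilityMeasure P] {X : Ω → α} {Y : Ω → β}
    (hX : Measurable X) (hY : Measurable Y) (h : IndepFun X Y P)
    {f : α × β → ℝ≥0∞} (hf : Measurable f) :
    ∫⁻ ω, f (X ω, Y ω) ∂P = ∫⁻ x, ∫⁻ y, f (x, y) ∂(P.map Y) ∂(P.map X) := by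
  haveI : IsProbabilityMeasure (P.map Y) := Measure.isProbabilityMeasure_map hY.aemeasurable
  have hmap : P.map (fun ω => (X ω, Y ω)) = (P.map X).prod (P.map Y) :=
    (indepFun_iff_map_prod_eq_prod_map_map hX.aemeasurable hY.aemeasurable).mp h
  rw [← lintegral_map hf (hX.prodMk hY), hmap, lintegral_prod _ hf.aemeasurable]

lemma bind_smul_measure {α β : Type*} [MeasurableSpace α] [MeasurableSpace β]
    (μ : Measure α) (c : ℝ≥0∞) {κ : α → Measure β} (hκ : Measurable κ) :
    (c • μ).bind κ = c • (μ.bind κ) := by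
  ext s hs
  simp only [Measure.smul_apply, smul_eq_mul, Measure.bind_apply hs hκ.aemeasurable, lintegral_smul_measure]

/-! ### The killed Euler chain -/

instance srcInst {d : ℕ} (i : Option (Option ℕ)) : MeasurableSpace (srcType d i) := srcMS d i

section Chain

variable {d : ℕ} {b : Torus d → Fin d → ℝ} {lam : Torus d → ℝ} {γ : ℝ}
  {Ω : Type*} [MeasurableSpace Ω] {P : Measure Ω}
  {Z : ℕ → Ω → Torus d} {G : ℕ → Ω → Fin d → ℝ} {Ev : Ω → ℝ}

/-- The accumulated killing rate. -/
def sfun (lam : Torus d → ℝ) (γ : ℝ) (Z : ℕ → Ω → Torus d) (n : ℕ) (ω : Ω) : ℝ :=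
  γ * ∑ k ∈ Finset.Icc 1 n, lam (Z k ω)

/-- The survival weight. -/
def wfun (lam : Torus d → ℝ) (γ : ℝ) (Z : ℕ → Ω → Torus d) (n : ℕ) (ω : Ω) : ℝ≥0∞ :=
  ENNReal.ofReal (Real.exp (-(sfun lam γ Z n ω)))

/-- The unnormalized law of the killed chain. -/
def nu (lam : Torus d → ℝ) (γ : ℝ) (P : Measure Ω) (Z : ℕ → Ω → Torus d) (n : ℕ) :
    Measure (Torus d) :=
  (P.withDensity (wfun lam γ Z n)).map (Z n)

lemma sfun_zero (ω : Ω) : sfun lam γ Z 0 ω = 0 := by simp [sfun]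

lemma sfun_nonneg (hlam0 : ∀ z, 0 ≤ lam z) (hγ : 0 ≤ γ) (n : ℕ) (ω : Ω) :
    0 ≤ sfun lam γ Z n ω :=
  mul_nonneg hγ (Finset.sum_nonneg fun k _ => hlam0 _)

lemma sfun_succ (n : ℕ) (ω : Ω) :
    sfun lam γ Z (n + 1) ω = sfun lam γ Z n ω + γ * lam (Z (n + 1) ω) := by
  rw [sfun, sfun, Finset.sum_Icc_succ_top (Nat.le_add_left 1 n), mul_add]

lemma wfun_succ (n : ℕ) (ω : Ω) :
    wfun lam γ Z (n + 1) ω = wfun lam γ Z n ω * dens lam γ (Z (n + 1) ω) := by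
  rw [wfun, wfun, dens, sfun_succ, neg_add, Real.exp_add,
    ENNReal.ofReal_mul (Real.exp_nonneg _)]

variable (hb : IsC1Drift b) (hlamc : Continuous lam)
  (hZmeas : Measurable (Z 0)) (hGmeas : ∀ n, Measurable (G n)) (hEmeas : Measurable Ev)
  (hrec : ∀ n ω, Z (n + 1) ω
      = Z n ω + Torus.proj (fun i => γ * b (Z n ω) i + Real.sqrt γ * G n ω i))

include hb hZmeas hGmeas hrec in
lemma measurable_Z : ∀ k, Measurable (Z k) := by
  intro k
  induction k with
  | zero => exact hZmeas
  | succ n ih =>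
    have h : Z (n + 1) = fun ω => step b γ (Z n ω) (G n ω) := funext fun ω => hrec n ω
    rw [h]
    exact (measurable_step hb).comp (ih.prodMk (hGmeas n))

include hlamc hb hZmeas hGmeas hrec in
lemma measurable_sfun (n : ℕ) : Measurable (sfun lam γ Z n) := by
  apply Measurable.const_mul
  exact Finset.measurable_sum _ fun k _ =>
    hlamc.measurable.comp (measurable_Z hb hZmeas hGmeas hrec k)

include hlamc hb hZmeas hGmeas hrec in
lemma measurable_wfun (n : ℕ) : Measurable (wfun lam γ Z n) :=
  ENNReal.measurable_ofReal.comp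
    (Real.measurable_exp.comp (measurable_sfun hb hlamc hZmeas hGmeas hrec n).neg)

/-- The chain as a function of the initial data and noise. -/
def zrec (b : Torus d → Fin d → ℝ) (γ : ℝ) : ℕ → Torus d → (ℕ → Fin d → ℝ) → Torus d
  | 0, z, _ => z
  | k + 1, z, g => step b γ (zrec b γ k z g) (g k)

lemma measurable_zrec (hb : IsC1Drift b) (k : ℕ) :
    Measurable (fun p : Torus d × (ℕ → Fin d → ℝ) => zrec b γ k p.1 p.2) := by
  induction k with
  | zero => exact measurable_fst
  | succ m ih =>
    exact (measurable_step hb).comp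
      (ih.prodMk ((measurable_pi_apply m).comp measurable_snd))

include hrec in
lemma zrec_eq (n : ℕ) (ω : Ω) (g : ℕ → Fin d → ℝ) (hg : ∀ j, j < n → g j = G j ω) :
    ∀ k, k ≤ n → Z k ω = zrec b γ k (Z 0 ω) g := by
  intro k
  induction k with
  | zero => intro _; rfl
  | succ m ih =>
    intro hm
    have hmn : m < n := Nat.lt_of_succ_le hm
    rw [zrec, ← ih (Nat.le_of_lt hmn), hg m hmn]
    exact hrec m ω

lemma srcFam_measurable (hZmeas : Measurable (Z 0)) (hGmeas : ∀ n, Measurable (G n))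
    (hEmeas : Measurable Ev) : ∀ i, Measurable (srcFam (Z 0) G Ev i) := by
  intro i
  match i with
  | none => exact hEmeas
  | some none => exact hZmeas
  | some (some k) => exact hGmeas k

include hb hlamc hZmeas hGmeas hEmeas hrec in
lemma indep_W (hindep : iIndepFun (m := srcMS d) (srcFam (Z 0) G Ev) P)
    (n : ℕ) (i0 : Option (Option ℕ)) (hi0 : i0 = none ∨ i0 = some (some n)) :
    IndepFun (fun ω => (Z n ω, sfun lam γ Z n ω)) (srcFam (Z 0) G Ev i0) P := by
  classical
  set S : Finset (Option (Option ℕ)) :=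
    insert (some none) ((Finset.range n).image (fun j => some (some j))) with hS
  set T : Finset (Option (Option ℕ)) := {i0} with hT
  have hST : Disjoint S T := by
    rw [Finset.disjoint_right]
    intro x hx
    rw [hT, Finset.mem_singleton] at hx
    subst hx
    rcases hi0 with h | h <;> subst h <;> simp [hS] <;> omega
  have h2 := hindep.indepFun_finset S T hST (srcFam_measurable hZmeas hGmeas hEmeas)
  have hmemZ : (some none : Option (Option ℕ)) ∈ S := Finset.mem_insert_self _ _
  have hmemG : ∀ j, j < n → (some (some j) : Option (Option ℕ)) ∈ S := fun j hj =>
    Finset.mem_insert_of_mem (Finset.mem_image_of_mem _ (Finset.mem_range.mpr hj))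
  set φ0 : (∀ i : S, srcType d i) → Torus d × (ℕ → Fin d → ℝ) := fun h =>
    (h ⟨some none, hmemZ⟩, fun j => if hj : j < n then h ⟨some (some j), hmemG j hj⟩ else 0)
    with hφ0def
  have hφ0 : Measurable φ0 := by
    apply Measurable.prodMk
    · exact measurable_pi_apply (⟨some none, hmemZ⟩ : S)
    · apply measurable_pi_lambda _ fun j => ?_
      by_cases hj : j < n
      · simp only [hj, ↓reduceDIte]
        exact measurable_pi_apply _
      · simp only [hj, ↓reduceDIte]
        exact measurable_const
  set φ : (∀ i : S, srcType d i) → Torus d × ℝ := fun h =>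
    (zrec b γ n (φ0 h).1 (φ0 h).2,
      γ * ∑ k ∈ Finset.Icc 1 n, lam (zrec b γ k (φ0 h).1 (φ0 h).2)) with hφdef
  have hφ : Measurable φ := by
    apply Measurable.prodMk
    · exact (measurable_zrec hb n).comp hφ0
    · apply Measurable.const_mul
      exact Finset.measurable_sum _ fun k _ =>
        hlamc.measurable.comp ((measurable_zrec hb k).comp hφ0)
  have hmemT : i0 ∈ T := Finset.mem_singleton_self _
  set ψ : (∀ i : T, srcType d i) → srcType d i0 := fun h => h ⟨i0, hmemT⟩ with hψdef
  have hψ : Measurable ψ := measurable_pi_apply _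
  have h3 := h2.comp hφ hψ
  have heq1 : (φ ∘ fun a (i : S) => srcFam (Z 0) G Ev i a)
      = fun ω => (Z n ω, sfun lam γ Z n ω) := by
    funext ω
    have hz : ∀ k, k ≤ n →
        Z k ω = zrec b γ k (Z 0 ω) (fun j => if hj : j < n then G j ω else 0) :=
      zrec_eq hrec n ω _ (fun j hj => dif_pos hj)
    show (zrec b γ n (Z 0 ω) _, γ * ∑ k ∈ Finset.Icc 1 n, lam (zrec b γ k (Z 0 ω) _))
      = (Z n ω, sfun lam γ Z n ω)
    refine Prod.ext ?_ ?_
    · exact (hz n le_rfl).symm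
    · show γ * ∑ k ∈ Finset.Icc 1 n, lam (zrec b γ k (Z 0 ω) _) = sfun lam γ Z n ω
      rw [sfun]
      congr 1
      refine Finset.sum_congr rfl fun k hk => ?_
      exact congrArg lam (hz k (Finset.mem_Icc.mp hk).2).symm
  have heq2 : (ψ ∘ fun a (i : T) => srcFam (Z 0) G Ev i a) = srcFam (Z 0) G Ev i0 := rfl
  rw [heq1, heq2] at h3
  exact h3

include hb hlamc hZmeas hGmeas hEmeas hrec in
lemma restrict_eq_nu [IsProbabilityMeasure P]
    (hindep : iIndepFun (m := srcMS d) (srcFam (Z 0) G Ev) P)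
    (hlam0 : ∀ z, 0 ≤ lam z) (hγ : 0 < γ) (hE : P.map Ev = expLaw) (n : ℕ) :
    (P.restrict {ω | sfun lam γ Z n ω < Ev ω}).map (Z n) = nu lam γ P Z n := by
  have hsfm := measurable_sfun hb hlamc hZmeas hGmeas hrec n
  have hZn := measurable_Z hb hZmeas hGmeas hrec n
  set B := {ω | sfun lam γ Z n ω < Ev ω} with hBdef
  have hBm : MeasurableSet B := measurableSet_lt hsfm hEmeas
  ext A hA
  rw [Measure.map_apply hZn hA, Measure.restrict_apply (hZn hA)]
  rw [nu, Measure.map_apply hZn hA, withDensity_apply _ (hZn hA),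
    ← lintegral_indicator (hZn hA)]
  set W := fun ω => (Z n ω, sfun lam γ Z n ω) with hWdef
  have hWm : Measurable W := hZn.prodMk hsfm
  set f : (Torus d × ℝ) × ℝ → ℝ≥0∞ := fun p =>
    Set.indicator A (fun _ => 1) p.1.1
      * Set.indicator {q : (Torus d × ℝ) × ℝ | q.1.2 < q.2} (fun _ => 1) p with hfdef
  have hfm : Measurable f := by
    apply Measurable.mul
    · exact (measurable_one.indicator hA).comp (measurable_fst.comp measurable_fst)
    · exact measurable_one.indicator
        (measurableSet_lt (measurable_snd.comp measurable_fst) measurable_snd)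
  have hmid : Measurable fun w : Torus d × ℝ =>
      Set.indicator A (fun _ => (1 : ℝ≥0∞)) w.1 * expLaw (Set.Ioi w.2) := by
    apply Measurable.mul
    · exact (measurable_one.indicator hA).comp measurable_fst
    · have hanti : Antitone fun t : ℝ => expLaw (Set.Ioi t) := fun s t hst =>
        measure_mono (fun x hx => lt_of_le_of_lt hst hx)
      exact (hanti.measurable).comp measurable_snd
  calc P (Z n ⁻¹' A ∩ B)
      = ∫⁻ ω, f (W ω, Ev ω) ∂P := by
        rw [← lintegral_indicator_one ((hZn hA).inter hBm)]
        apply lintegral_congr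
        intro ω
        by_cases h1 : Z n ω ∈ A <;> by_cases h2 : sfun lam γ Z n ω < Ev ω <;>
          simp [hfdef, hWdef, Set.indicator_apply, h1, h2, hBdef]
    _ = ∫⁻ w, ∫⁻ e, f (w, e) ∂(P.map Ev) ∂(P.map W) :=
        lintegral_indepFun hWm hEmeas
          (indep_W hb hlamc hZmeas hGmeas hEmeas hrec hindep n none (Or.inl rfl)) hfm
    _ = ∫⁻ w, Set.indicator A (fun _ => 1) w.1 * expLaw (Set.Ioi w.2) ∂(P.map W) := by
        rw [hE]
        apply lintegral_congr
        intro w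
        have hptw : ∀ e, f (w, e)
            = Set.indicator A (fun _ => (1 : ℝ≥0∞)) w.1
              * Set.indicator (Set.Ioi w.2) (fun _ => 1) e := by
          intro e
          rw [hfdef]
          by_cases h2 : w.2 < e <;> simp [Set.indicator_apply, h2, Set.mem_Ioi]
        simp_rw [hptw]
        rw [lintegral_const_mul _
          (show Measurable ((Set.Ioi w.2).indicator (fun _ => (1 : ℝ≥0∞))) from
            measurable_const.indicator measurableSet_Ioi),
          lintegral_indicator_const measurableSet_Ioi, one_mul]
    _ = ∫⁻ ω, Set.indicator A (fun _ => 1) (W ω).1 * expLaw (Set.Ioi (W ω).2) ∂P :=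
        lintegral_map hmid hWm
    _ = ∫⁻ ω, Set.indicator (Z n ⁻¹' A) (wfun lam γ Z n) ω ∂P := by
        apply lintegral_congr
        intro ω
        rw [hWdef]
        simp only
        rw [expLaw_Ioi (sfun_nonneg hlam0 hγ.le n ω)]
        by_cases h1 : Z n ω ∈ A <;> simp [Set.indicator_apply, h1, wfun]

include hb hlamc hZmeas hGmeas hEmeas hrec in
lemma measure_lt_Ev [IsProbabilityMeasure P]
    (hindep : iIndepFun (m := srcMS d) (srcFam (Z 0) G Ev) P)
    (hlam0 : ∀ z, 0 ≤ lam z) (hγ : 0 < γ) (hE : P.map Ev = expLaw) (n : ℕ) :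
    P {ω | sfun lam γ Z n ω < Ev ω} = nu lam γ P Z n Set.univ := by
  have h := restrict_eq_nu hb hlamc hZmeas hGmeas hEmeas hrec hindep hlam0 hγ hE n
  have hZn := measurable_Z hb hZmeas hGmeas hrec n
  calc P {ω | sfun lam γ Z n ω < Ev ω}
      = (P.restrict {ω | sfun lam γ Z n ω < Ev ω}).map (Z n) Set.univ := by
        rw [Measure.map_apply hZn MeasurableSet.univ, Set.preimage_univ,
          Measure.restrict_apply MeasurableSet.univ, Set.univ_inter]
    _ = nu lam γ P Z n Set.univ := by rw [h]

lemma death_ae (hlam0 : ∀ z, 0 ≤ lam z) (hγ : 0 < γ) (hEmeas : Measurable Ev)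
    (hE : P.map Ev = expLaw) (n : ℕ) :
    {ω | ENNReal.ofReal ((n : ℝ) * γ) < deathTime lam γ Z Ev ω}
      =ᵐ[P] {ω | sfun lam γ Z n ω < Ev ω} := by
  have hnull : P {ω | Ev ω ≤ 0} = 0 := by
    have h1 : {ω | Ev ω ≤ 0} = Ev ⁻¹' Set.Iic 0 := rfl
    rw [h1, ← Measure.map_apply hEmeas measurableSet_Iic, hE, expLaw_Iic_zero]
  have hae : ∀ᵐ ω ∂P, 0 < Ev ω := by
    have hset : {a | ¬ (0:ℝ) < Ev a} = {ω | Ev ω ≤ 0} := by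
      ext ω
      exact not_lt
    rw [ae_iff, hset]
    exact hnull
  rw [Filter.eventuallyEq_set]
  filter_upwards [hae] with ω hω
  constructor
  · intro hlt
    by_contra hcon
    push_neg at hcon
    have hn1 : 1 ≤ n := by
      rcases Nat.eq_zero_or_pos n with h0 | h
      · exfalso
        rw [h0, sfun_zero] at hcon
        linarith
      · exact h
    have hle : deathTime lam γ Z Ev ω ≤ ENNReal.ofReal ((n : ℝ) * γ) := by
      rw [deathTime]
      exact iInf_le_of_le n (iInf_le _ ⟨hn1, hcon⟩)
    exact absurd (lt_of_lt_of_le hlt hle) (lt_irrefl _)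
  · intro hlt
    have hge : ENNReal.ofReal (((n : ℝ) + 1) * γ) ≤ deathTime lam γ Z Ev ω := by
      rw [deathTime]
      refine le_iInf fun m => le_iInf fun hm => ?_
      obtain ⟨hm1, hmE⟩ := hm
      have hnm : n < m := by
        by_contra hmn
        push_neg at hmn
        have hsub : γ * ∑ k ∈ Finset.Icc 1 m, lam (Z k ω) ≤ sfun lam γ Z n ω := by
          rw [sfun]
          apply mul_le_mul_of_nonneg_left _ hγ.le
          apply Finset.sum_le_sum_of_subset_of_nonneg
          · exact Finset.Icc_subset_Icc_right hmn
          · intro k _ _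
            exact hlam0 _
        linarith
      apply ENNReal.ofReal_le_ofReal
      have hcast : (n : ℝ) + 1 ≤ (m : ℝ) := by exact_mod_cast hnm
      nlinarith
    refine lt_of_lt_of_le ?_ hge
    rw [ENNReal.ofReal_lt_ofReal_iff (by positivity)]
    nlinarith

include hb hlamc hZmeas hGmeas hEmeas hrec in
lemma nu_succ [IsProbabilityMeasure P]
    (hindep : iIndepFun (m := srcMS d) (srcFam (Z 0) G Ev) P)
    (hG : ∀ m, P.map (G m) = stdGaussian d) (n : ℕ) :
    nu lam γ P Z (n + 1)
      = ((nu lam γ P Z n).bind (eulerK b γ)).withDensity (dens lam γ) := by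
  have hZn := measurable_Z hb hZmeas hGmeas hrec
  have hsfm := measurable_sfun hb hlamc hZmeas hGmeas hrec n
  have hwm := measurable_wfun hb hlamc hZmeas hGmeas hrec
  ext A hA
  set H : Torus d → ℝ≥0∞ := fun x =>
    ∫⁻ g, Set.indicator A (dens lam γ) (step b γ x g) ∂(stdGaussian d) with hHdef
  have hHm : Measurable H :=
    Measurable.lintegral_prod_right'
      (((measurable_dens hlamc).indicator hA).comp (measurable_step hb))
  have hRHS : ((nu lam γ P Z n).bind (eulerK b γ)).withDensity (dens lam γ) A
      = ∫⁻ ω, wfun lam γ Z n ω * H (Z n ω) ∂P := by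
    rw [withDensity_apply _ hA, ← lintegral_indicator hA,
      Measure.lintegral_bind (measurable_eulerK hb).aemeasurable ((measurable_dens hlamc).indicator hA).aemeasurable]
    have h1 : ∀ x, ∫⁻ z, Set.indicator A (dens lam γ) z ∂(eulerK b γ x) = H x := fun x =>
      lintegral_eulerK hb x ((measurable_dens hlamc).indicator hA)
    simp_rw [h1]
    rw [nu, lintegral_map hHm (hZn n),
      lintegral_withDensity_eq_lintegral_mul _ (hwm n)
        (show Measurable fun ω => H (Z n ω) from hHm.comp (hZn n))]
    exact lintegral_congr fun ω => rfl
  rw [hRHS]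
  -- Left-hand side
  set W := fun ω => (Z n ω, sfun lam γ Z n ω) with hWdef
  have hWm : Measurable W := (hZn n).prodMk hsfm
  set f : (Torus d × ℝ) × (Fin d → ℝ) → ℝ≥0∞ := fun p =>
    Set.indicator A (dens lam γ) (step b γ p.1.1 p.2) * ENNReal.ofReal (Real.exp (-p.1.2))
    with hfdef
  have hfm : Measurable f := by
    apply Measurable.mul
    · exact ((measurable_dens hlamc).indicator hA).comp
        ((measurable_step hb).comp
          ((measurable_fst.comp measurable_fst).prodMk measurable_snd))
    · exact ENNReal.measurable_ofReal.comp
        (Real.measurable_exp.comp (measurable_snd.comp measurable_fst).neg)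
  have hLHS : nu lam γ P Z (n + 1) A = ∫⁻ ω, f (W ω, G n ω) ∂P := by
    rw [nu, Measure.map_apply (hZn (n + 1)) hA, withDensity_apply _ ((hZn (n + 1)) hA),
      ← lintegral_indicator ((hZn (n + 1)) hA)]
    apply lintegral_congr
    intro ω
    have hz : Z (n + 1) ω = step b γ (Z n ω) (G n ω) := hrec n ω
    simp only [hfdef, hWdef, ← hz]
    by_cases h1 : Z (n + 1) ω ∈ A
    · rw [Set.indicator_of_mem (Set.mem_preimage.mpr h1), Set.indicator_of_mem h1,
        wfun_succ, mul_comm, wfun]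
    · rw [Set.indicator_of_notMem (fun hc => h1 (Set.mem_preimage.mp hc)),
        Set.indicator_of_notMem h1, zero_mul]
  rw [hLHS, lintegral_indepFun hWm (hGmeas n)
    (indep_W hb hlamc hZmeas hGmeas hEmeas hrec hindep n (some (some n)) (Or.inr rfl)) hfm,
    hG n]
  have hmid : ∀ w : Torus d × ℝ,
      ∫⁻ g, f (w, g) ∂(stdGaussian d) = ENNReal.ofReal (Real.exp (-w.2)) * H w.1 := by
    intro w
    simp only [hfdef]
    rw [lintegral_mul_const _
      (show Measurable fun g => Set.indicator A (dens lam γ) (step b γ w.1 g) from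
        ((measurable_dens hlamc).indicator hA).comp
          ((measurable_step hb).comp (measurable_const.prodMk measurable_id))), mul_comm]
  simp_rw [hmid]
  rw [lintegral_map (show Measurable fun w : Torus d × ℝ =>
      ENNReal.ofReal (Real.exp (-w.2)) * H w.1 from
    (ENNReal.measurable_ofReal.comp
      (Real.measurable_exp.comp measurable_snd.neg)).mul (hHm.comp measurable_fst)) hWm]
  apply lintegral_congr
  intro ω
  simp only [hWdef]
  rfl

end Chain
end NCE

/-- For every `n`, the law `η_n` of the nonlinear chain equals the conditional law of the
killed Euler chain given survival: `η_n = Law(Z̃_n | T̃ > nγ)`. -/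
theorem nonlinear_chain_eq_conditioned_euler_chain
    {d : ℕ} (b : Torus d → Fin d → ℝ) (hb : IsC1Drift b)
    (lam : Torus d → ℝ) (hlamc : Continuous lam) (hlam0 : ∀ z, 0 ≤ lam z)
    (γ : ℝ) (hγ : 0 < γ)
    (η0 : Measure (Torus d)) (hη0 : IsProbabilityMeasure η0)
    {Ω : Type*} [MeasurableSpace Ω] (P : Measure Ω) (hP : IsProbabilityMeasure P)
    (Z : ℕ → Ω → Torus d) (G : ℕ → Ω → Fin d → ℝ) (Ev : Ω → ℝ)
    (hZmeas : Measurable (Z 0)) (hGmeas : ∀ n, Measurable (G n)) (hEmeas : Measurable Ev)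
    (hZ0 : P.map (Z 0) = η0)
    (hrec : ∀ n ω, Z (n + 1) ω
      = Z n ω + Torus.proj (fun i => γ * b (Z n ω) i + Real.sqrt γ * G n ω i))
    (hG : ∀ n, P.map (G n) = stdGaussian d)
    (hE : P.map Ev = expLaw)
    (hindep : iIndepFun (m := srcMS d) (srcFam (Z 0) G Ev) P)
    (n : ℕ) :
    etaChain b lam γ η0 n
      = (P[|{ω | ENNReal.ofReal ((n : ℝ) * γ) < deathTime lam γ Z Ev ω}]).map (Z n) := by
  classical
  have hZm := NCE.measurable_Z hb hZmeas hGmeas hrec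
  obtain ⟨M, hM⟩ : ∃ M, ∀ z, lam z ≤ M := by
    obtain ⟨zM, -, hzM⟩ := isCompact_univ.exists_isMaxOn Set.univ_nonempty hlamc.continuousOn
    exact ⟨lam zM, fun z => hzM (Set.mem_univ z)⟩
  have hsle : ∀ m (ω : Ω), NCE.sfun lam γ Z m ω ≤ γ * ((m : ℝ) * M) := by
    intro m ω
    rw [NCE.sfun]
    apply mul_le_mul_of_nonneg_left _ hγ.le
    calc ∑ k ∈ Finset.Icc 1 m, lam (Z k ω) ≤ (Finset.Icc 1 m).card • M :=
          Finset.sum_le_card_nsmul _ _ _ (fun k _ => hM _)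
      _ = (m : ℝ) * M := by
          rw [Nat.card_Icc, nsmul_eq_mul]
          norm_num
  have hnu_univ : ∀ m, NCE.nu lam γ P Z m Set.univ = ∫⁻ ω, NCE.wfun lam γ Z m ω ∂P := by
    intro m
    rw [NCE.nu, Measure.map_apply (hZm m) MeasurableSet.univ, Set.preimage_univ,
      withDensity_apply _ MeasurableSet.univ, setLIntegral_univ]
  have hmass0 : ∀ m, NCE.nu lam γ P Z m Set.univ ≠ 0 := by
    intro m
    rw [hnu_univ m]
    have hlb : ∀ ω : Ω, ENNReal.ofReal (Real.exp (-(γ * ((m : ℝ) * M))))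
        ≤ NCE.wfun lam γ Z m ω := by
      intro ω
      rw [NCE.wfun]
      exact ENNReal.ofReal_le_ofReal (Real.exp_le_exp.mpr (neg_le_neg (hsle m ω)))
    intro h0
    have hle : ENNReal.ofReal (Real.exp (-(γ * ((m : ℝ) * M))))
        ≤ ∫⁻ ω, NCE.wfun lam γ Z m ω ∂P := by
      calc ENNReal.ofReal (Real.exp (-(γ * ((m : ℝ) * M))))
          = ∫⁻ _ : Ω, ENNReal.ofReal (Real.exp (-(γ * ((m : ℝ) * M)))) ∂P := by
            rw [lintegral_const, measure_univ, mul_one]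
        _ ≤ ∫⁻ ω, NCE.wfun lam γ Z m ω ∂P := lintegral_mono hlb
    rw [h0] at hle
    exact (ENNReal.ofReal_pos.mpr (Real.exp_pos _)).ne' (le_antisymm hle zero_le)
  have hmassT : ∀ m, NCE.nu lam γ P Z m Set.univ ≠ ∞ := by
    intro m
    rw [hnu_univ m]
    have hub : ∫⁻ ω, NCE.wfun lam γ Z m ω ∂P ≤ 1 := by
      calc ∫⁻ ω, NCE.wfun lam γ Z m ω ∂P ≤ ∫⁻ _ : Ω, 1 ∂P := by
            apply lintegral_mono
            intro ω
            rw [NCE.wfun, ← ENNReal.ofReal_one]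
            apply ENNReal.ofReal_le_ofReal
            rw [Real.exp_le_one_iff, neg_nonpos]
            exact NCE.sfun_nonneg hlam0 hγ.le m ω
        _ = 1 := by rw [lintegral_const, measure_univ, mul_one]
    exact (lt_of_le_of_lt hub ENNReal.one_lt_top).ne
  have hform : ∀ m, etaChain b lam γ η0 m
      = (NCE.nu lam γ P Z m Set.univ)⁻¹ • NCE.nu lam γ P Z m := by
    intro m
    induction m with
    | zero =>
      have hw0 : NCE.wfun lam γ Z 0 = fun _ : Ω => 1 := by
        funext ω
        rw [NCE.wfun, NCE.sfun_zero]
        simp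
      have h0 : NCE.nu lam γ P Z 0 = η0 := by
        rw [NCE.nu, hw0, show (fun _ : Ω => (1 : ℝ≥0∞)) = 1 from rfl,
          withDensity_one, hZ0]
      rw [etaChain, h0, measure_univ, inv_one, one_smul]
    | succ m ih =>
      have hc0 := hmass0 m
      have hcT := hmassT m
      set c := NCE.nu lam γ P Z m Set.univ with hc
      have hnurec := NCE.nu_succ hb hlamc hZmeas hGmeas hEmeas hrec hindep hG m
      haveI hprob : IsProbabilityMeasure (etaChain b lam γ η0 m) := by
        rw [ih]
        constructor
        rw [Measure.smul_apply, smul_eq_mul, ENNReal.inv_mul_cancel hc0 hcT]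
      have hnusmul : NCE.nu lam γ P Z m = c • etaChain b lam γ η0 m := by
        rw [ih, smul_smul, ENNReal.mul_inv_cancel hc0 hcT, one_smul]
      have hkey : NCE.nu lam γ P Z (m + 1)
          = c • ((etaChain b lam γ η0 m).bind (eulerK b γ)).withDensity (NCE.dens lam γ) := by
        rw [hnurec, hnusmul, NCE.bind_smul_measure _ _ (NCE.measurable_eulerK hb),
          withDensity_smul_measure]
      set q1 := ∫⁻ z, NCE.dens lam γ z ∂((etaChain b lam γ η0 m).bind (eulerK b γ)) with hq1
      have hmass_succ : NCE.nu lam γ P Z (m + 1) Set.univ = c * q1 := by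
        rw [hkey, Measure.smul_apply, smul_eq_mul, withDensity_apply _ MeasurableSet.univ,
          setLIntegral_univ]
      have hQ := NCE.bind_Qker hb hlamc hlam0 hγ (etaChain b lam γ η0 m)
      have hinv : (c * q1)⁻¹ * c = q1⁻¹ := by
        rw [ENNReal.mul_inv (Or.inl hc0) (Or.inl hcT), mul_comm c⁻¹ q1⁻¹, mul_assoc,
          ENNReal.inv_mul_cancel hc0 hcT, mul_one]
      rw [etaChain, hQ, hmass_succ, hkey, smul_smul, hinv]
  rw [hform n]
  have hae := NCE.death_ae (Z := Z) hlam0 hγ hEmeas hE n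
  have hrestrict := NCE.restrict_eq_nu hb hlamc hZmeas hGmeas hEmeas hrec hindep hlam0 hγ hE n
  have hPB := NCE.measure_lt_Ev hb hlamc hZmeas hGmeas hEmeas hrec hindep hlam0 hγ hE n
  have hD : P[|{ω | ENNReal.ofReal ((n : ℝ) * γ) < deathTime lam γ Z Ev ω}]
      = (P {ω | NCE.sfun lam γ Z n ω < Ev ω})⁻¹
          • P.restrict {ω | NCE.sfun lam γ Z n ω < Ev ω} := by
    rw [ProbabilityTheory.cond, Measure.restrict_congr_set hae, measure_congr hae]
  rw [hD, Measure.map_smul, hrestrict, hPB]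

end
end

section
/- For every μ ∈ P(𝕋^d) and every bounded measurable f : 𝕋^d → ℝ, one has μ Q_μ f = μK[f(1−p)] / μK[1−p]; in particular the map μ ↦ μQ_μ is the one-step evolution of the Euler chain conditioned on survival. -/
open MeasureTheory ProbabilityTheory Real Filter
open scoped ENNReal NNReal BigOperators

noncomputable section

lemma torusProj_measurable {d : ℕ} : Measurable (Torus.proj (d := d)) :=
  measurable_pi_lambda _ fun i => AddCircle.measurable_mk'.comp (measurable_pi_apply i)

lemma isC1Drift.measurable_b {d : ℕ} {b : Torus d → Fin d → ℝ} (hb : IsC1Drift b) :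
    Measurable b := by
  haveI : Fact ((0:ℝ) < 1) := ⟨one_pos⟩
  set σ : Torus d → (Fin d → ℝ) :=
    fun x i => ((AddCircle.equivIoc (1:ℝ) 0 (x i) : Set.Ioc (0:ℝ) (0+1)) : ℝ) with hσdef
  have hσ : Measurable σ :=
    measurable_pi_lambda _ fun i =>
      measurable_subtype_coe.comp
        ((AddCircle.measurableEquivIoc (1:ℝ) 0).measurable.comp (measurable_pi_apply i))
  have key : ∀ x : Torus d, Torus.proj (σ x) = x := by
    intro x; funext i
    have h1 := (AddCircle.equivIoc (1:ℝ) 0).symm_apply_apply (x i)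
    rw [AddCircle.equivIoc, QuotientAddGroup.equivIocMod_symm_apply] at h1
    simpa [Torus.proj, hσdef, AddCircle.equivIoc] using h1
  have hbb : b = (fun v => b (Torus.proj v)) ∘ σ := by
    funext x; simp [Function.comp, key x]
  rw [hbb]
  exact hb.continuous.measurable.comp hσ

lemma geom_aux {P A : ℝ≥0∞} (hP : P < 1) : A + P * ((1 - P)⁻¹ * A) = (1 - P)⁻¹ * A := by
  have h0 : (1 : ℝ≥0∞) - P ≠ 0 := (tsub_pos_of_lt hP).ne'
  have htop : (1 : ℝ≥0∞) - P ≠ ⊤ := (tsub_le_self.trans_lt ENNReal.one_lt_top).ne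
  calc A + P * ((1 - P)⁻¹ * A)
      = ((1 - P) + P) * ((1 - P)⁻¹ * A) := by
        rw [add_mul]
        congr 1
        rw [← mul_assoc, ENNReal.mul_inv_cancel h0 htop, one_mul]
    _ = (1 - P)⁻¹ * A := by rw [tsub_add_cancel_of_le hP.le, one_mul]

/-- For every `μ` and every bounded measurable `f`, `μ Q_μ f = μK[f(1−p)] / μK[1−p]`:
the map `μ ↦ μ Q_μ` is the one-step evolution of the Euler chain conditioned on survival. -/
theorem muQmu_eq_conditioned_step
    {d : ℕ} (b : Torus d → Fin d → ℝ) (hb : IsC1Drift b)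
    (lam : Torus d → ℝ) (hlamc : Continuous lam) (hlam0 : ∀ z, 0 ≤ lam z)
    (γ : ℝ) (hγ : 0 < γ)
    (μ : Measure (Torus d)) (hμ : IsProbabilityMeasure μ)
    (f : Torus d → ℝ) (hf : Measurable f) (hfbd : ∃ M, ∀ z, |f z| ≤ M) :
    ∫ z, f z ∂(μ.bind (Qker b lam γ μ))
      = (∫ z, f z * (1 - pkill lam γ z) ∂(μ.bind (eulerK b γ)))
        / (∫ z, (1 - pkill lam γ z) ∂(μ.bind (eulerK b γ))) := by
  haveI : Fact ((0:ℝ) < 1) := ⟨one_pos⟩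
  have hbm : Measurable b := isC1Drift.measurable_b hb
  haveI hG : IsProbabilityMeasure (stdGaussian d) := by
    rw [_root_.stdGaussian]; infer_instance
  -- measurability of the Euler kernel
  have hH : Measurable (fun q : Torus d × (Fin d → ℝ) =>
      q.1 + Torus.proj (fun i => γ * b q.1 i + Real.sqrt γ * q.2 i)) := by
    apply Measurable.add measurable_fst
    apply torusProj_measurable.comp
    exact measurable_pi_lambda _ fun i =>
      (measurable_const.mul ((measurable_pi_apply i).comp (hbm.comp measurable_fst))).add
        (measurable_const.mul ((measurable_pi_apply i).comp measurable_snd))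
  have hHx : ∀ x : Torus d, Measurable (fun g : Fin d → ℝ =>
      x + Torus.proj (fun i => γ * b x i + Real.sqrt γ * g i)) :=
    fun x => hH.comp measurable_prodMk_left
  have hK : Measurable (eulerK b γ) := by
    apply Measure.measurable_of_measurable_coe
    intro s hs
    have hrw : ∀ x : Torus d, eulerK b γ x s
        = ∫⁻ g, s.indicator (fun _ => (1:ℝ≥0∞))
            (x + Torus.proj (fun i => γ * b x i + Real.sqrt γ * g i)) ∂(stdGaussian d) := by
      intro x
      rw [eulerK, Measure.map_apply (hHx x) hs, ← lintegral_indicator_one ((hHx x) hs)]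
      congr 1
    simp_rw [hrw]
    exact Measurable.lintegral_prod_right
      ((measurable_const.indicator hs).comp hH)
  have hKP : ∀ x, IsProbabilityMeasure (eulerK b γ x) := fun x => by
    rw [eulerK]; exact Measure.isProbabilityMeasure_map (hHx x).aemeasurable
  -- facts about the killing probability
  have hpc : Continuous (pkill lam γ) :=
    continuous_const.sub (Real.continuous_exp.comp (continuous_const.mul hlamc).neg)
  have hpmeas : Measurable (pkill lam γ) := hpc.measurable
  have h1p : ∀ z, 0 ≤ 1 - pkill lam γ z := fun z => by
    simp only [pkill, sub_sub_cancel]; exact (Real.exp_pos _).le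
  have hp0 : ∀ z, 0 ≤ pkill lam γ z := fun z => by
    simp only [pkill, sub_nonneg]
    exact Real.exp_le_one_iff.mpr (neg_nonpos.mpr (mul_nonneg hγ.le (hlam0 z)))
  have hple1 : ∀ z, pkill lam γ z ≤ 1 := fun z => by
    simp only [pkill, tsub_le_iff_right, le_add_iff_nonneg_right]
    exact (Real.exp_pos _).le
  obtain ⟨M, hM⟩ := (isCompact_range hlamc).bddAbove
  have hMz : ∀ z, lam z ≤ M := fun z => hM ⟨z, rfl⟩
  have hplt : ∀ z, pkill lam γ z ≤ 1 - Real.exp (-(γ * M)) := fun z => by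
    simp only [pkill]
    have : Real.exp (-(γ * M)) ≤ Real.exp (-(γ * lam z)) :=
      Real.exp_le_exp.mpr (neg_le_neg (mul_le_mul_of_nonneg_left (hMz z) hγ.le))
    linarith
  have hpm1 : 1 - Real.exp (-(γ * M)) < 1 := by
    have := Real.exp_pos (-(γ * M)); linarith
  -- the measure ν = μ K is a probability measure
  have hKu : ∀ x, eulerK b γ x Set.univ = 1 := fun x => (hKP x).measure_univ
  haveI hν : IsProbabilityMeasure (μ.bind (eulerK b γ)) := by
    constructor
    rw [Measure.bind_apply MeasurableSet.univ hK.aemeasurable]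
    simp [hKu]
  -- the survival mass
  have hp' : Measurable fun z => ENNReal.ofReal (pkill lam γ z) := hpmeas.ennreal_ofReal
  have hg : Measurable fun z => ENNReal.ofReal (1 - pkill lam γ z) :=
    (measurable_const.sub hpmeas).ennreal_ofReal
  have hPle : (∫⁻ z, ENNReal.ofReal (pkill lam γ z) ∂(μ.bind (eulerK b γ)))
      ≤ ENNReal.ofReal (1 - Real.exp (-(γ * M))) := by
    calc ∫⁻ z, ENNReal.ofReal (pkill lam γ z) ∂(μ.bind (eulerK b γ))
        ≤ ∫⁻ _, ENNReal.ofReal (1 - Real.exp (-(γ * M))) ∂(μ.bind (eulerK b γ)) :=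
          lintegral_mono fun z => ENNReal.ofReal_le_ofReal (hplt z)
      _ = ENNReal.ofReal (1 - Real.exp (-(γ * M))) := by simp
  have hP1 : (∫⁻ z, ENNReal.ofReal (pkill lam γ z) ∂(μ.bind (eulerK b γ))) < 1 :=
    hPle.trans_lt (ENNReal.ofReal_lt_one.mpr hpm1)
  have hPtop : (∫⁻ z, ENNReal.ofReal (pkill lam γ z) ∂(μ.bind (eulerK b γ))) ≠ ⊤ :=
    (hP1.trans ENNReal.one_lt_top).ne
  -- measurability of the rebirth kernel
  have hQ : Measurable (Qker b lam γ μ) := by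
    apply Measure.measurable_of_measurable_coe
    intro s hs
    have hrw : ∀ x : Torus d, Qker b lam γ μ x s
        = (∫⁻ z, s.indicator (fun z => ENNReal.ofReal (1 - pkill lam γ z)) z ∂(eulerK b γ x))
          + (∫⁻ z, ENNReal.ofReal (pkill lam γ z) ∂(eulerK b γ x))
            * ((∑' k : ℕ, (∫⁻ z, ENNReal.ofReal (pkill lam γ z) ∂(μ.bind (eulerK b γ))) ^ k)
              * ((μ.bind (eulerK b γ)).withDensity
                  (fun z => ENNReal.ofReal (1 - pkill lam γ z))) s) := by
      intro x
      rw [Qker, Measure.add_apply, Measure.smul_apply, smul_eq_mul,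
        withDensity_apply _ hs, lintegral_indicator hs, mul_assoc]
    simp_rw [hrw]
    apply Measurable.add
    · exact (Measure.measurable_lintegral (hg.indicator hs)).comp hK
    · exact ((Measure.measurable_lintegral hp').comp hK).mul_const _
  -- the bound measure is a scalar multiple of the survival-weighted ν
  have hbind : μ.bind (Qker b lam γ μ)
      = ((1 - ∫⁻ z, ENNReal.ofReal (pkill lam γ z) ∂(μ.bind (eulerK b γ)))⁻¹)
        • ((μ.bind (eulerK b γ)).withDensity
            (fun z => ENNReal.ofReal (1 - pkill lam γ z))) := by
    ext s hs
    rw [Measure.bind_apply hs hQ.aemeasurable, Measure.smul_apply, smul_eq_mul]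
    have hrw : ∀ x : Torus d, Qker b lam γ μ x s
        = (∫⁻ z, s.indicator (fun z => ENNReal.ofReal (1 - pkill lam γ z)) z ∂(eulerK b γ x))
          + (∫⁻ z, ENNReal.ofReal (pkill lam γ z) ∂(eulerK b γ x))
            * ((∑' k : ℕ, (∫⁻ z, ENNReal.ofReal (pkill lam γ z) ∂(μ.bind (eulerK b γ))) ^ k)
              * ((μ.bind (eulerK b γ)).withDensity
                  (fun z => ENNReal.ofReal (1 - pkill lam γ z))) s) := by
      intro x
      rw [Qker, Measure.add_apply, Measure.smul_apply, smul_eq_mul,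
        withDensity_apply _ hs, lintegral_indicator hs, mul_assoc]
    simp_rw [hrw]
    have m1 : Measurable fun x : Torus d =>
        ∫⁻ z, s.indicator (fun z => ENNReal.ofReal (1 - pkill lam γ z)) z ∂(eulerK b γ x) :=
      (Measure.measurable_lintegral (hg.indicator hs)).comp hK
    have m2 : Measurable fun x : Torus d =>
        ∫⁻ z, ENNReal.ofReal (pkill lam γ z) ∂(eulerK b γ x) :=
      (Measure.measurable_lintegral hp').comp hK
    rw [lintegral_add_left m1,
      lintegral_mul_const _ m2,
      ← Measure.lintegral_bind hK.aemeasurable (hg.indicator hs).aemeasurable,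
      ← Measure.lintegral_bind hK.aemeasurable hp'.aemeasurable,
      lintegral_indicator hs, ← withDensity_apply _ hs,
      ENNReal.tsum_geometric]
    exact geom_aux hP1
  rw [hbind, integral_smul_measure]
  have hwd : ∫ z, f z ∂((μ.bind (eulerK b γ)).withDensity
        (fun z => ENNReal.ofReal (1 - pkill lam γ z)))
      = ∫ z, f z * (1 - pkill lam γ z) ∂(μ.bind (eulerK b γ)) := by
    have hco : (fun z => ENNReal.ofReal (1 - pkill lam γ z))
        = fun z => ((Real.toNNReal (1 - pkill lam γ z) : ℝ≥0) : ℝ≥0∞) := rfl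
    rw [hco, integral_withDensity_eq_integral_smul
      (show Measurable (fun z => 1 - pkill lam γ z) from measurable_const.sub hpmeas).real_toNNReal]
    refine integral_congr_ae (Eventually.of_forall fun z => ?_)
    simp only [NNReal.smul_def, smul_eq_mul]
    rw [Real.coe_toNNReal _ (h1p z), mul_comm]
  have hden : ∫ z, (1 - pkill lam γ z) ∂(μ.bind (eulerK b γ))
      = (1 - ∫⁻ z, ENNReal.ofReal (pkill lam γ z) ∂(μ.bind (eulerK b γ))).toReal := by
    rw [integral_eq_lintegral_of_nonneg_ae (Eventually.of_forall h1p)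
      (measurable_const.sub hpmeas).aestronglyMeasurable]
    congr 1
    have hco : ∀ z, ENNReal.ofReal (1 - pkill lam γ z)
        = 1 - ENNReal.ofReal (pkill lam γ z) := fun z => by
      rw [ENNReal.ofReal_sub _ (hp0 z), ENNReal.ofReal_one]
    simp_rw [hco]
    rw [lintegral_sub hp' hPtop
      (Eventually.of_forall fun z => ENNReal.ofReal_le_one.mpr (hple1 z)),
      lintegral_one, measure_univ]
  rw [hwd, hden, ENNReal.toReal_inv, smul_eq_mul, inv_mul_eq_div]


end
end

section
/- Let μ₀, μ₁, μ₀′, μ₁′ ∈ P(𝕋^d), let (X₀, X₀′) be a coupling of μ₀K and μ₀′K and (X₁, X₁′) a coupling of μ₁K and μ₁′K, independent of each other. Then W_ρ(μ₀ Q_{μ₁}, μ₀′ Q_{μ₁′}) ≤ h · ( E[ρ(X₀,X₀′)] + (q₀/(1−q₁)) E[ρ(X₁,X₁′)] ), where h = 1 − min p + (aβ)^{-1} γ L_λ, and q_i = P(U < p(X_i) ∧ p(X_i′)) for i = 0,1 with U ~ Uniform([0,1]) independent of (X₀,X₀′,X₁,X₁′). -/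
open MeasureTheory ProbabilityTheory Real Filter
open scoped ENNReal NNReal BigOperators

noncomputable section

-- ======================= Auxiliary lemmas =======================
section AuxBasic

instance factZeroLtOne : Fact ((0:ℝ) < 1) := ⟨one_pos⟩

def tsec {d : ℕ} (x : Torus d) : Fin d → ℝ :=
  fun i => ((AddCircle.measurableEquivIoc 1 0 (x i) : Set.Ioc (0:ℝ) (0+1)) : ℝ)

lemma measurable_tsec {d : ℕ} : Measurable (tsec (d := d)) :=
  measurable_pi_lambda _ fun i =>
    (measurable_subtype_coe.comp ((AddCircle.measurableEquivIoc 1 0).measurable)).comp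
      (measurable_pi_apply i)

lemma proj_tsec {d : ℕ} (x : Torus d) : Torus.proj (tsec x) = x := by
  funext i
  show ((((AddCircle.equivIoc 1 0) (x i) : Set.Ioc (0:ℝ) (0+1)) : ℝ) : AddCircle (1:ℝ)) = x i
  exact (AddCircle.equivIoc 1 0).symm_apply_apply (x i)

lemma continuous_torusProj {d : ℕ} : Continuous (Torus.proj (d := d)) :=
  continuous_pi fun i => (AddCircle.continuous_mk' 1).comp (continuous_apply i)

end AuxBasic

section AuxK
variable {d : ℕ} {b : Torus d → Fin d → ℝ} {γ : ℝ}

lemma measurable_b (hb : Continuous fun v : Fin d → ℝ => b (Torus.proj v)) : Measurable b := by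
  have : b = (fun v : Fin d → ℝ => b (Torus.proj v)) ∘ tsec := by
    funext x; simp [Function.comp, proj_tsec]
  rw [this]; exact hb.measurable.comp measurable_tsec

lemma measurable_euler_pair (hbm : Measurable b) :
    Measurable (fun q : Torus d × (Fin d → ℝ) =>
      q.1 + Torus.proj (fun i => γ * b q.1 i + Real.sqrt γ * q.2 i)) := by
  apply Measurable.add measurable_fst
  apply continuous_torusProj.measurable.comp
  apply measurable_pi_lambda _ fun i => ?_
  exact (((measurable_pi_apply i).comp (hbm.comp measurable_fst)).const_mul γ).add
    (Measurable.const_mul (f := fun c : Torus d × (Fin d → ℝ) => c.2 i)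
      ((measurable_pi_apply i).comp measurable_snd) (Real.sqrt γ))

instance : IsProbabilityMeasure (stdGaussian d) := by
  unfold _root_.stdGaussian; infer_instance

lemma eulerK_prob (hbm : Measurable b) (x : Torus d) : IsProbabilityMeasure (eulerK b γ x) := by
  refine Measure.isProbabilityMeasure_map ?_
  have hF : Measurable (fun g : Fin d → ℝ =>
      x + Torus.proj (fun i => γ * b x i + Real.sqrt γ * g i)) :=
    (measurable_euler_pair (γ := γ) hbm).comp (measurable_const.prodMk measurable_id)
  exact hF.aemeasurable

lemma measurable_eulerK (hbm : Measurable b) : Measurable (eulerK b γ) := by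
  rw [Measure.measurable_measure]
  intro s hs
  have hmp := measurable_euler_pair (b := b) (γ := γ) hbm
  have hF : ∀ x : Torus d, Measurable (fun g : Fin d → ℝ =>
      x + Torus.proj (fun i => γ * b x i + Real.sqrt γ * g i)) :=
    fun x => hmp.comp (measurable_const.prodMk measurable_id)
  have : ∀ x : Torus d, eulerK b γ x s
      = ∫⁻ g, s.indicator (fun _ => 1)
          (x + Torus.proj (fun i => γ * b x i + Real.sqrt γ * g i)) ∂(stdGaussian d) := by
    intro x
    rw [eulerK, Measure.map_apply (hF x) hs]
    rw [← lintegral_indicator_one ((hF x) hs)]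
    rfl
  simp only [this]
  exact Measurable.lintegral_prod_right ((measurable_one.indicator hs).comp hmp)

lemma bind_eulerK_prob (hbm : Measurable b) (μ : Measure (Torus d)) [IsProbabilityMeasure μ] :
    IsProbabilityMeasure (μ.bind (eulerK b γ)) := by
  constructor
  rw [Measure.bind_apply MeasurableSet.univ (measurable_eulerK hbm).aemeasurable]
  have h1 : ∀ x : Torus d, eulerK b γ x Set.univ = 1 :=
    fun x => (eulerK_prob hbm x).measure_univ
  simp [h1]

end AuxK

section AuxDist
variable {d : ℕ}

lemma continuous_tdist : Continuous (fun q : Torus d × Torus d => tdist q.1 q.2) := by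
  unfold tdist
  apply Real.continuous_sqrt.comp
  apply continuous_finset_sum _ fun i _ => ?_
  exact (Continuous.dist ((continuous_apply i).comp continuous_fst)
    ((continuous_apply i).comp continuous_snd)).pow 2

lemma tdist_nonneg' {x y : Torus d} : 0 ≤ tdist x y := Real.sqrt_nonneg _

lemma tdist_le {x y : Torus d} : tdist x y ≤ Real.sqrt d / 2 := by
  unfold tdist
  rw [show Real.sqrt d / 2 = Real.sqrt ((d : ℝ) / 4) by
    rw [show (d:ℝ)/4 = d * (1/2)^2 by ring, Real.sqrt_mul (Nat.cast_nonneg d)]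
    rw [Real.sqrt_sq (by norm_num)]; ring]
  apply Real.sqrt_le_sqrt
  calc ∑ i, (dist (x i) (y i))^2 ≤ ∑ _i : Fin d, (1/2)^2 := by
        apply Finset.sum_le_sum fun i _ => ?_
        have h1 : dist (x i) (y i) ≤ (1:ℝ)/2 := by
          rw [dist_eq_norm]
          have := AddCircle.norm_le_half_period (p := (1:ℝ)) (x := x i - y i) one_ne_zero
          simpa using this
        have h0 : (0:ℝ) ≤ dist (x i) (y i) := dist_nonneg
        nlinarith
    _ = (d : ℝ)/4 := by simp [Finset.sum_const]; ring

lemma rho_nonneg {a : ℝ} (ha : 0 < a) {x y : Torus d} : 0 ≤ rho a x y := by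
  unfold rho
  apply div_nonneg _ ha.le
  have : Real.exp (-a * tdist x y) ≤ 1 := by
    rw [Real.exp_le_one_iff]
    have := tdist_nonneg' (x := x) (y := y)
    nlinarith
  linarith

lemma rho_le {a : ℝ} (ha : 0 < a) {x y : Torus d} : rho a x y ≤ 1 / a := by
  unfold rho
  have : (0:ℝ) < Real.exp (-a * tdist x y) := Real.exp_pos _
  gcongr
  linarith

lemma beta_tdist_le_rho {a : ℝ} (ha : 0 < a) {x y : Torus d} :
    (2 * (1 - Real.exp (-a * Real.sqrt d / 2)) / (a * Real.sqrt d)) * tdist x y ≤ rho a x y := by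
  rcases Nat.eq_zero_or_pos d with hd | hd
  · subst hd
    have hx : x = y := Subsingleton.elim x y
    subst hx
    have ht : tdist x x = 0 := by simp [tdist]
    simp [rho, ht]
  · set T : ℝ := Real.sqrt d / 2 with hT
    have hT0 : 0 < T := by
      have : (0:ℝ) < Real.sqrt d := Real.sqrt_pos.2 (by exact_mod_cast hd)
      positivity
    set t : ℝ := tdist x y with htdef
    have ht0 : 0 ≤ t := tdist_nonneg'
    have htT : t ≤ T := tdist_le
    have key : Real.exp (-a * t) ≤ (1 - t/T) + (t/T) * Real.exp (-a*T) := by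
      have hmem : ∀ u : ℝ, u ∈ (Set.univ : Set ℝ) := fun _ => trivial
      have h1' : (0:ℝ) ≤ 1 - t/T := by
        have : t/T ≤ 1 := (div_le_one hT0).2 htT
        linarith
      have h2' : (0:ℝ) ≤ t/T := by positivity
      have h3' : (1 - t/T) + (t/T) = 1 := by ring
      have hcvx := convexOn_exp.2 (hmem 0) (hmem (-a*T)) h1' h2' h3'
      simp only [smul_eq_mul, mul_zero, zero_add, Real.exp_zero, mul_one] at hcvx
      have harg : (t/T) * (-a*T) = -a*t := by field_simp
      rw [harg] at hcvx
      linarith [hcvx]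
    have hexpT : Real.exp (-a*T) ≤ 1 := by
      rw [Real.exp_le_one_iff]; nlinarith
    have h2 : (1 - Real.exp (-a*T)) * (t/T) ≤ 1 - Real.exp (-a*t) := by nlinarith [key]
    have hrw : 2 * (1 - Real.exp (-a * Real.sqrt d / 2)) / (a * Real.sqrt d) * t
        = (1 - Real.exp (-a*T)) * (t/T) / a := by
      rw [hT]
      have hsd : (0:ℝ) < Real.sqrt d := Real.sqrt_pos.2 (by exact_mod_cast hd)
      rw [show -a * Real.sqrt d / 2 = -a * (Real.sqrt d / 2) by ring]
      field_simp
    rw [hrw, rho]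
    gcongr

end AuxDist

section AuxPkill
variable {d : ℕ} {lam : Torus d → ℝ} {γ L : ℝ}

lemma pkill_nonneg (hlam0 : ∀ z, 0 ≤ lam z) (hγ : 0 < γ) (z : Torus d) :
    0 ≤ pkill lam γ z := by
  unfold pkill
  have : Real.exp (-(γ * lam z)) ≤ 1 := by
    rw [Real.exp_le_one_iff]
    have := hlam0 z
    nlinarith
  linarith

lemma pkill_lt_one (z : Torus d) : pkill lam γ z < 1 := by
  unfold pkill
  have := Real.exp_pos (-(γ * lam z))
  linarith

lemma exp_lip {u v : ℝ} (hu : 0 ≤ u) (hv : 0 ≤ v) :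
    |Real.exp (-u) - Real.exp (-v)| ≤ |u - v| := by
  wlog h : u ≤ v generalizing u v
  · rw [abs_sub_comm, abs_sub_comm u v]; exact this hv hu (le_of_not_ge h)
  have h1 : Real.exp (-v) ≤ Real.exp (-u) := Real.exp_le_exp.2 (by linarith)
  rw [abs_of_nonneg (by linarith), abs_of_nonpos (by linarith)]
  have h2 : Real.exp (-u) - Real.exp (-v) = Real.exp (-u) * (1 - Real.exp (-(v - u))) := by
    rw [mul_sub, mul_one, ← Real.exp_add]; ring_nf
  rw [h2]
  have h3 : 1 - Real.exp (-(v-u)) ≤ v - u := by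
    have := Real.add_one_le_exp (-(v-u))
    linarith
  have h4 : Real.exp (-u) ≤ 1 := by rw [Real.exp_le_one_iff]; linarith
  have h5 : 0 ≤ 1 - Real.exp (-(v-u)) := by
    have : Real.exp (-(v-u)) ≤ 1 := by rw [Real.exp_le_one_iff]; linarith
    linarith
  nlinarith

lemma pkill_lip (hlam0 : ∀ z, 0 ≤ lam z) (hγ : 0 < γ)
    (hLip : ∀ x y, |lam x - lam y| ≤ L * tdist x y) (x y : Torus d) :
    |pkill lam γ x - pkill lam γ y| ≤ γ * L * tdist x y := by
  unfold pkill
  have h1 : |(1 - Real.exp (-(γ * lam x))) - (1 - Real.exp (-(γ * lam y)))|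
      = |Real.exp (-(γ * lam x)) - Real.exp (-(γ * lam y))| := by
    rw [show (1 - Real.exp (-(γ * lam x))) - (1 - Real.exp (-(γ * lam y)))
      = -(Real.exp (-(γ * lam x)) - Real.exp (-(γ * lam y))) by ring, abs_neg]
  rw [h1]
  calc |Real.exp (-(γ * lam x)) - Real.exp (-(γ * lam y))|
      ≤ |γ * lam x - γ * lam y| :=
        exp_lip (mul_nonneg hγ.le (hlam0 x)) (mul_nonneg hγ.le (hlam0 y))
    _ = γ * |lam x - lam y| := by
        rw [← mul_sub, abs_mul, abs_of_pos hγ]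
    _ ≤ γ * (L * tdist x y) := by
        apply mul_le_mul_of_nonneg_left (hLip x y) hγ.le
    _ = γ * L * tdist x y := by ring

lemma continuous_pkill (hlamc : Continuous lam) : Continuous (pkill lam γ) := by
  unfold pkill
  fun_prop

end AuxPkill

section AuxMeas
variable {E : Type*} [MeasurableSpace E]

lemma map_fst_withDensity (pp : Measure (E × E)) {f : E → ℝ≥0∞} (hf : Measurable f) :
    (pp.withDensity (fun z => f z.1)).map Prod.fst = (pp.map Prod.fst).withDensity f := by
  ext s hs
  rw [Measure.map_apply measurable_fst hs, withDensity_apply _ (measurable_fst hs),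
    withDensity_apply _ hs, ← lintegral_indicator (measurable_fst hs),
    ← lintegral_indicator hs, lintegral_map (hf.indicator hs) measurable_fst]
  refine lintegral_congr fun z => ?_
  by_cases h : z.1 ∈ s <;> simp [h]

lemma map_snd_withDensity (pp : Measure (E × E)) {f : E → ℝ≥0∞} (hf : Measurable f) :
    (pp.withDensity (fun z => f z.2)).map Prod.snd = (pp.map Prod.snd).withDensity f := by
  ext s hs
  rw [Measure.map_apply measurable_snd hs, withDensity_apply _ (measurable_snd hs),
    withDensity_apply _ hs, ← lintegral_indicator (measurable_snd hs),
    ← lintegral_indicator hs, lintegral_map (hf.indicator hs) measurable_snd]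
  refine lintegral_congr fun z => ?_
  by_cases h : z.2 ∈ s <;> simp [h]

end AuxMeas

section AuxOfReal

lemma ofReal_A1 {x y : ℝ} (hy : y ≤ 1) :
    ENNReal.ofReal (1 - max x y) + ENNReal.ofReal (y - x) = ENNReal.ofReal (1 - x) := by
  rcases le_total x y with h | h
  · rw [max_eq_right h, ← ENNReal.ofReal_add (by linarith) (by linarith)]
    ring_nf
  · rw [max_eq_left h, ENNReal.ofReal_eq_zero.2 (by linarith : y - x ≤ 0), add_zero]

lemma ofReal_A3 {x y : ℝ} (hy : 0 ≤ y) :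
    ENNReal.ofReal (x - y) + ENNReal.ofReal (min x y) = ENNReal.ofReal x := by
  rcases le_total x y with h | h
  · rw [min_eq_left h, ENNReal.ofReal_eq_zero.2 (by linarith : x - y ≤ 0), zero_add]
  · rw [min_eq_right h, ← ENNReal.ofReal_add (by linarith) hy]
    ring_nf

lemma ofReal_A5 {x y : ℝ} (hx : x ≤ 1) :
    ENNReal.ofReal (1 - x) + ENNReal.ofReal (x - y) = ENNReal.ofReal (1 - min x y) := by
  rcases le_total x y with h | h
  · rw [min_eq_left h, ENNReal.ofReal_eq_zero.2 (by linarith : x - y ≤ 0), add_zero]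
  · rw [min_eq_right h, ← ENNReal.ofReal_add (by linarith) (by linarith)]
    ring_nf

lemma ofReal_A6 {x : ℝ} (h0 : 0 ≤ x) (h1 : x ≤ 1) :
    ENNReal.ofReal (1 - x) + ENNReal.ofReal x = 1 := by
  rw [← ENNReal.ofReal_add (by linarith) h0]
  norm_num

lemma ofReal_abs' {x y : ℝ} :
    ENNReal.ofReal (y - x) + ENNReal.ofReal (x - y) = ENNReal.ofReal |x - y| := by
  rcases le_total x y with h | h
  · rw [ENNReal.ofReal_eq_zero.2 (by linarith : x - y ≤ 0), add_zero, abs_sub_comm,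
      abs_of_nonneg (by linarith)]
  · rw [ENNReal.ofReal_eq_zero.2 (by linarith : y - x ≤ 0), zero_add,
      abs_of_nonneg (by linarith)]

end AuxOfReal

section AuxWass
variable {E : Type*} [MeasurableSpace E]

lemma Wass_le_of_coupling {ρ : E → E → ℝ} (hρ : ∀ z w, 0 ≤ ρ z w) {μ ν : Measure E}
    {Γ : Measure (E × E)} (hΓ : Γ ∈ Coupling μ ν) :
    Wass ρ μ ν ≤ ∫ z, ρ z.1 z.2 ∂Γ := by
  apply csInf_le
  · refine ⟨0, fun r hr => ?_⟩
    obtain ⟨Q, -, rfl⟩ := hr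
    exact integral_nonneg fun z => hρ _ _
  · exact ⟨Γ, hΓ, rfl⟩

end AuxWass

section AuxQker
variable {d : ℕ} {b : Torus d → Fin d → ℝ} {lam : Torus d → ℝ} {γ : ℝ}

lemma measurable_Qker (hbm : Measurable b) (hpm : Measurable (pkill lam γ))
    (μ1 : Measure (Torus d)) : Measurable (Qker b lam γ μ1) := by
  rw [Measure.measurable_measure]
  intro s hs
  have hKm := measurable_eulerK (γ := γ) hbm
  have hfm : Measurable fun z => ENNReal.ofReal (1 - pkill lam γ z) :=
    (measurable_const.sub hpm).ennreal_ofReal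
  have hgm : Measurable fun z => ENNReal.ofReal (pkill lam γ z) := hpm.ennreal_ofReal
  simp only [Qker, Measure.coe_add, Pi.add_apply, Measure.smul_apply, smul_eq_mul]
  apply Measurable.add
  · have h1 : ∀ x : Torus d,
        (eulerK b γ x).withDensity (fun z => ENNReal.ofReal (1 - pkill lam γ z)) s
        = ∫⁻ y, s.indicator (fun z => ENNReal.ofReal (1 - pkill lam γ z)) y
            ∂(eulerK b γ x) := by
      intro x; rw [withDensity_apply _ hs, lintegral_indicator hs]
    simp only [h1]
    exact (Measure.measurable_lintegral (hfm.indicator hs)).comp hKm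
  · apply Measurable.mul ?_ measurable_const
    apply Measurable.mul ?_ measurable_const
    exact (Measure.measurable_lintegral hgm).comp hKm

lemma bind_Qker (hbm : Measurable b) (hpm : Measurable (pkill lam γ))
    (μ0 μ1 : Measure (Torus d)) :
    μ0.bind (Qker b lam γ μ1)
      = (μ0.bind (eulerK b γ)).withDensity (fun z => ENNReal.ofReal (1 - pkill lam γ z))
        + ((∫⁻ z, ENNReal.ofReal (pkill lam γ z) ∂(μ0.bind (eulerK b γ)))
            * (1 - ∫⁻ z, ENNReal.ofReal (pkill lam γ z) ∂(μ1.bind (eulerK b γ)))⁻¹)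
          • ((μ1.bind (eulerK b γ)).withDensity
              (fun z => ENNReal.ofReal (1 - pkill lam γ z))) := by
  have hKm := measurable_eulerK (γ := γ) hbm
  have hfm : Measurable fun z => ENNReal.ofReal (1 - pkill lam γ z) :=
    (measurable_const.sub hpm).ennreal_ofReal
  have hgm : Measurable fun z => ENNReal.ofReal (pkill lam γ z) := hpm.ennreal_ofReal
  ext s hs
  rw [Measure.bind_apply hs (measurable_Qker hbm hpm μ1).aemeasurable]
  have h1 : ∀ x : Torus d,
      Qker b lam γ μ1 x s
      = (∫⁻ y, s.indicator (fun z => ENNReal.ofReal (1 - pkill lam γ z)) y ∂(eulerK b γ x))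
        + (∫⁻ z, ENNReal.ofReal (pkill lam γ z) ∂(eulerK b γ x))
          * ((1 - ∫⁻ z, ENNReal.ofReal (pkill lam γ z) ∂(μ1.bind (eulerK b γ)))⁻¹
            * ((μ1.bind (eulerK b γ)).withDensity
                (fun z => ENNReal.ofReal (1 - pkill lam γ z)) s)) := by
    intro x
    simp only [Qker, Measure.coe_add, Pi.add_apply, Measure.smul_apply, smul_eq_mul,
      ENNReal.tsum_geometric, withDensity_apply _ hs, lintegral_indicator hs, mul_assoc]
  simp only [h1]
  have hm1 : Measurable fun x : Torus d =>
      ∫⁻ y, s.indicator (fun z => ENNReal.ofReal (1 - pkill lam γ z)) y ∂(eulerK b γ x) :=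
    (Measure.measurable_lintegral (hfm.indicator hs)).comp hKm
  have hm2 : Measurable fun x : Torus d =>
      ∫⁻ z, ENNReal.ofReal (pkill lam γ z) ∂(eulerK b γ x) :=
    (Measure.measurable_lintegral hgm).comp hKm
  rw [lintegral_add_left hm1]
  rw [lintegral_mul_const _ hm2]
  rw [← Measure.lintegral_bind hKm.aemeasurable (hfm.indicator hs).aemeasurable,
    ← Measure.lintegral_bind hKm.aemeasurable hgm.aemeasurable]
  rw [Measure.coe_add, Pi.add_apply, Measure.smul_apply, smul_eq_mul,
    withDensity_apply _ hs, withDensity_apply _ hs, lintegral_indicator hs, mul_assoc]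

end AuxQker


section AuxUnif

lemma unif_lt_prob {Ω : Type*} [MeasurableSpace Ω] {P : Measure Ω} [IsProbabilityMeasure P]
    {E : Type*} [MeasurableSpace E] {V : Ω → E} {U : Ω → ℝ}
    (hV : Measurable V) (hUm : Measurable U) (hU : P.map U = unifLaw)
    (hind : IndepFun V U P) {F : E → ℝ} (hF : Measurable F) (hF1 : ∀ v, F v ≤ 1) :
    P {ω | U ω < F (V ω)} = ∫⁻ v, ENNReal.ofReal (F v) ∂(P.map V) := by
  haveI : IsFiniteMeasure unifLaw := by
    constructor
    rw [unifLaw, Measure.restrict_apply_univ]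
    simp
  haveI : IsProbabilityMeasure (P.map V) := Measure.isProbabilityMeasure_map hV.aemeasurable
  have hS : MeasurableSet {q : E × ℝ | q.2 < F q.1} :=
    measurableSet_lt measurable_snd (hF.comp measurable_fst)
  have hpair : Measurable fun ω => (V ω, U ω) := hV.prodMk hUm
  have h1 : {ω | U ω < F (V ω)} = (fun ω => (V ω, U ω)) ⁻¹' {q : E × ℝ | q.2 < F q.1} := rfl
  rw [h1, ← Measure.map_apply hpair hS]
  rw [(indepFun_iff_map_prod_eq_prod_map_map hV.aemeasurable hUm.aemeasurable).1 hind, hU]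
  rw [Measure.prod_apply hS]
  refine lintegral_congr fun v => ?_
  have h2 : Prod.mk v ⁻¹' {q : E × ℝ | q.2 < F q.1} = Set.Iio (F v) := rfl
  rw [h2, unifLaw, Measure.restrict_apply measurableSet_Iio]
  have h3 : Set.Iio (F v) ∩ Set.Icc (0:ℝ) 1 = Set.Ico 0 (F v) := by
    ext u
    constructor
    · rintro ⟨h4, h5, h6⟩; exact ⟨h5, h4⟩
    · rintro ⟨h5, h4⟩; exact ⟨h4, h5, le_trans h4.le (hF1 v)⟩
  rw [h3, Real.volume_Ico, sub_zero]

end AuxUnif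

set_option maxHeartbeats 2000000 in
/-- The basic coupling estimate: if `(X₀,X₀')` is a coupling of `μ₀K, μ₀'K`, `(X₁,X₁')` a
coupling of `μ₁K, μ₁'K`, independent of each other, and `U ~ U([0,1])` independent of them, then
`W_ρ(μ₀ Q_{μ₁}, μ₀' Q_{μ₁'}) ≤ h (E[ρ(X₀,X₀')] + q₀/(1−q₁) E[ρ(X₁,X₁')])` where
`h = 1 − min p + (aβ)⁻¹ γ L_λ` and `q_i = P(U < p(X_i) ∧ p(X_i'))`. -/
theorem basic_coupling_estimate
    {d : ℕ} (b : Torus d → Fin d → ℝ) (hb : IsC1Drift b)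
    (lam : Torus d → ℝ) (hlamc : Continuous lam) (hlam0 : ∀ z, 0 ≤ lam z)
    (L : ℝ) (hL : 0 ≤ L) (hLip : LipDrift L lam)
    (a γ : ℝ) (ha : 0 < a) (hγ : 0 < γ)
    (μ0 μ1 μ0' μ1' : Measure (Torus d))
    (hμ0 : IsProbabilityMeasure μ0) (hμ1 : IsProbabilityMeasure μ1)
    (hμ0' : IsProbabilityMeasure μ0') (hμ1' : IsProbabilityMeasure μ1')
    {Ω : Type*} [MeasurableSpace Ω] (P : Measure Ω) (hP : IsProbabilityMeasure P)
    (X0 X0' X1 X1' : Ω → Torus d) (U : Ω → ℝ)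
    (hX0m : Measurable X0) (hX0'm : Measurable X0')
    (hX1m : Measurable X1) (hX1'm : Measurable X1') (hUm : Measurable U)
    (hX0 : P.map X0 = μ0.bind (eulerK b γ)) (hX0' : P.map X0' = μ0'.bind (eulerK b γ))
    (hX1 : P.map X1 = μ1.bind (eulerK b γ)) (hX1' : P.map X1' = μ1'.bind (eulerK b γ))
    (hU : P.map U = unifLaw)
    (hindep01 : IndepFun (fun ω => (X0 ω, X0' ω)) (fun ω => (X1 ω, X1' ω)) P)
    (hindepU : IndepFun (fun ω => (X0 ω, X0' ω, X1 ω, X1' ω)) U P) :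
    Wass (rho a) (μ0.bind (Qker b lam γ μ1)) (μ0'.bind (Qker b lam γ μ1'))
      ≤ (1 - (⨅ z, pkill lam γ z)
            + (a * (2 * (1 - Real.exp (-a * Real.sqrt d / 2)) / (a * Real.sqrt d)))⁻¹ * γ * L)
        * ((∫ ω, rho a (X0 ω) (X0' ω) ∂P)
            + (P {ω | U ω < min (pkill lam γ (X0 ω)) (pkill lam γ (X0' ω))}).toReal
              / (1 - (P {ω | U ω < min (pkill lam γ (X1 ω)) (pkill lam γ (X1' ω))}).toReal)
              * ∫ ω, rho a (X1 ω) (X1' ω) ∂P) := by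
  classical
  have hb' : Continuous fun v : Fin d → ℝ => b (Torus.proj v) :=
    ContDiff.continuous (𝕜 := ℝ) (n := 1) hb
  have hbm : Measurable b := measurable_b hb'
  have hKm : Measurable (eulerK b γ) := measurable_eulerK hbm
  have hpc : Continuous (pkill lam γ) := continuous_pkill hlamc
  have hpm : Measurable (pkill lam γ) := hpc.measurable
  -- density functions
  set f : Torus d → ℝ≥0∞ := fun z => ENNReal.ofReal (1 - pkill lam γ z) with hfdef
  set g : Torus d → ℝ≥0∞ := fun z => ENNReal.ofReal (pkill lam γ z) with hgdef
  have hfm : Measurable f := (measurable_const.sub hpm).ennreal_ofReal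
  have hgm : Measurable g := hpm.ennreal_ofReal
  -- pointwise bounds on pkill
  obtain ⟨zM, hzM⟩ : ∃ zM, ∀ z, lam z ≤ lam zM :=
    hlamc.exists_forall_ge' (0 : Torus d) (by
      rw [Filter.cocompact_eq_bot]
      exact Filter.eventually_bot)
  set ε : ℝ := Real.exp (-(γ * lam zM)) with hεdef
  have hε0 : 0 < ε := Real.exp_pos _
  have hp0 : ∀ z, 0 ≤ pkill lam γ z := pkill_nonneg hlam0 hγ
  have hp1 : ∀ z, pkill lam γ z ≤ 1 := fun z => (pkill_lt_one z).le
  have hple : ∀ z : Torus d, pkill lam γ z ≤ 1 - ε := by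
    intro z
    have : ε ≤ Real.exp (-(γ * lam z)) := by
      apply Real.exp_le_exp.2
      have := hzM z
      nlinarith
    unfold pkill
    linarith
  have hεle1 : ε ≤ 1 := by
    have := hple zM
    have := hp0 zM
    linarith
  -- infimum of pkill
  set mI : ℝ := ⨅ z, pkill lam γ z with hmIdef
  have hmI_le : ∀ z, mI ≤ pkill lam γ z := fun z =>
    ciInf_le ⟨0, fun r ⟨z', hz'⟩ => hz' ▸ hp0 z'⟩ z
  have hmI0 : 0 ≤ mI := le_ciInf hp0
  have hmI1 : mI ≤ 1 := le_trans (hmI_le 0) (hp1 0)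
  -- beta and the Lipschitz cost coefficient
  set β : ℝ := 2 * (1 - Real.exp (-a * Real.sqrt d / 2)) / (a * Real.sqrt d) with hβdef
  have hβ0 : 0 ≤ β := by
    apply div_nonneg _ (by positivity)
    have : Real.exp (-a * Real.sqrt d / 2) ≤ 1 := by
      rw [Real.exp_le_one_iff]
      have : (0:ℝ) ≤ Real.sqrt d := Real.sqrt_nonneg _
      nlinarith
    linarith
  set c2 : ℝ := (a * β)⁻¹ * γ * L with hc2def
  have hc2 : 0 ≤ c2 := by
    apply mul_nonneg (mul_nonneg _ hγ.le) hL
    exact inv_nonneg.2 (mul_nonneg ha.le hβ0)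
  set hh : ℝ := 1 - mI + c2 with hhdef
  have hh0 : 0 ≤ hh := by
    simp only [hhdef]
    linarith
  -- pointwise Lipschitz bound
  have hpt : ∀ z w : Torus d, |pkill lam γ z - pkill lam γ w| ≤ γ * L * β⁻¹ * rho a z w := by
    intro z w
    rcases Nat.eq_zero_or_pos d with hd | hd
    · subst hd
      have hzw : z = w := Subsingleton.elim z w
      subst hzw
      have ht : tdist z z = 0 := by simp [tdist]
      simp [rho, ht]
    · have hβpos : 0 < β := by
        rw [hβdef]
        have hsd : (0:ℝ) < Real.sqrt d := Real.sqrt_pos.2 (by exact_mod_cast hd)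
        have : Real.exp (-a * Real.sqrt d / 2) < 1 := by
          rw [Real.exp_lt_one_iff]
          nlinarith
        have h2 : (0:ℝ) < a * Real.sqrt d := by positivity
        apply div_pos (by linarith) h2
      have h1 : tdist z w ≤ β⁻¹ * rho a z w := by
        rw [← div_eq_inv_mul, le_div_iff₀ hβpos, mul_comm]
        exact beta_tdist_le_rho ha
      calc |pkill lam γ z - pkill lam γ w| ≤ γ * L * tdist z w :=
            pkill_lip hlam0 hγ hLip z w
        _ ≤ γ * L * (β⁻¹ * rho a z w) :=
            mul_le_mul_of_nonneg_left h1 (mul_nonneg hγ.le hL)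
        _ = γ * L * β⁻¹ * rho a z w := by ring
  -- the laws
  set ν0 : Measure (Torus d) := μ0.bind (eulerK b γ) with hν0def
  set ν0' : Measure (Torus d) := μ0'.bind (eulerK b γ) with hν0'def
  set ν1 : Measure (Torus d) := μ1.bind (eulerK b γ) with hν1def
  set ν1' : Measure (Torus d) := μ1'.bind (eulerK b γ) with hν1'def
  haveI : IsProbabilityMeasure ν0 := bind_eulerK_prob hbm μ0
  haveI : IsProbabilityMeasure ν0' := bind_eulerK_prob hbm μ0'
  haveI : IsProbabilityMeasure ν1 := bind_eulerK_prob hbm μ1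
  haveI : IsProbabilityMeasure ν1' := bind_eulerK_prob hbm μ1'
  set PA : Measure (Torus d × Torus d) := P.map (fun ω => (X0 ω, X0' ω)) with hPAdef
  set PB : Measure (Torus d × Torus d) := P.map (fun ω => (X1 ω, X1' ω)) with hPBdef
  haveI : IsProbabilityMeasure PA := Measure.isProbabilityMeasure_map (hX0m.prodMk hX0'm).aemeasurable
  haveI : IsProbabilityMeasure PB := Measure.isProbabilityMeasure_map (hX1m.prodMk hX1'm).aemeasurable
  have hPAfst : PA.map Prod.fst = ν0 := by
    rw [hPAdef, Measure.map_map measurable_fst (hX0m.prodMk hX0'm)]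
    exact hX0
  have hPAsnd : PA.map Prod.snd = ν0' := by
    rw [hPAdef, Measure.map_map measurable_snd (hX0m.prodMk hX0'm)]
    exact hX0'
  have hPBfst : PB.map Prod.fst = ν1 := by
    rw [hPBdef, Measure.map_map measurable_fst (hX1m.prodMk hX1'm)]
    exact hX1
  have hPBsnd : PB.map Prod.snd = ν1' := by
    rw [hPBdef, Measure.map_map measurable_snd (hX1m.prodMk hX1'm)]
    exact hX1'
  -- densities on the product space
  set g1 : Torus d × Torus d → ℝ≥0∞ :=
    fun z => ENNReal.ofReal (1 - max (pkill lam γ z.1) (pkill lam γ z.2)) with hg1def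
  set ga : Torus d × Torus d → ℝ≥0∞ :=
    fun z => ENNReal.ofReal (pkill lam γ z.2 - pkill lam γ z.1) with hgadef
  set gb : Torus d × Torus d → ℝ≥0∞ :=
    fun z => ENNReal.ofReal (pkill lam γ z.1 - pkill lam γ z.2) with hgbdef
  set gm : Torus d × Torus d → ℝ≥0∞ :=
    fun z => ENNReal.ofReal (min (pkill lam γ z.1) (pkill lam γ z.2)) with hgmdef
  have hp1m : Measurable fun z : Torus d × Torus d => pkill lam γ z.1 :=
    hpm.comp measurable_fst
  have hp2m : Measurable fun z : Torus d × Torus d => pkill lam γ z.2 :=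
    hpm.comp measurable_snd
  have hg1m : Measurable g1 := (measurable_const.sub (hp1m.max hp2m)).ennreal_ofReal
  have hgam : Measurable ga := (hp2m.sub hp1m).ennreal_ofReal
  have hgbm : Measurable gb := (hp1m.sub hp2m).ennreal_ofReal
  have hgmm : Measurable gm := (hp1m.min hp2m).ennreal_ofReal
  -- the cost function
  have hρcont : Continuous fun z : Torus d × Torus d => rho a z.1 z.2 := by
    unfold rho
    exact (continuous_const.sub (((continuous_const.mul continuous_tdist)).rexp)).div_const a
  set R : Torus d × Torus d → ℝ≥0∞ :=
    fun z => ENNReal.ofReal (rho a z.1 z.2) with hRdef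
  have hRm : Measurable R := hρcont.measurable.ennreal_ofReal
  have hRle : ∀ z : Torus d × Torus d, R z ≤ ENNReal.ofReal a⁻¹ := fun z =>
    ENNReal.ofReal_le_ofReal (by rw [← one_div]; exact rho_le ha)
  -- masses and normalized rebirth measures
  set sB : ℝ≥0∞ := ∫⁻ z, g z ∂ν1 with hsBdef
  set sB' : ℝ≥0∞ := ∫⁻ z, g z ∂ν1' with hsB'def
  set r0 : ℝ≥0∞ := ∫⁻ z, g z ∂ν0 with hr0def
  set r0' : ℝ≥0∞ := ∫⁻ z, g z ∂ν0' with hr0'def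
  set B : Measure (Torus d) := ν1.withDensity f with hBdef
  set B' : Measure (Torus d) := ν1'.withDensity f with hB'def
  -- generic facts about the density masses
  have hcB_eq : ∀ (ν : Measure (Torus d)), IsProbabilityMeasure ν →
      (ν.withDensity f) Set.univ = 1 - ∫⁻ z, g z ∂ν := by
    intro ν hν
    rw [withDensity_apply _ MeasurableSet.univ, setLIntegral_univ]
    refine ENNReal.eq_sub_of_add_eq ?_ ?_
    · exact ne_top_of_le_ne_top ENNReal.one_ne_top (by
        calc ∫⁻ z, g z ∂ν ≤ ∫⁻ _, 1 ∂ν :=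
              lintegral_mono fun z => by
                simp only [hgdef]
                exact ENNReal.ofReal_le_one.2 (hp1 z)
          _ = 1 := by simp [hν.measure_univ])
    · rw [← lintegral_add_left hfm]
      have : ∀ z, f z + g z = 1 := fun z => ofReal_A6 (hp0 z) (hp1 z)
      rw [lintegral_congr this]
      simp [hν.measure_univ]
  have hsble : ∀ (ν : Measure (Torus d)), IsProbabilityMeasure ν →
      ∫⁻ z, g z ∂ν ≤ ENNReal.ofReal (1 - ε) := by
    intro ν hν
    calc ∫⁻ z, g z ∂ν ≤ ∫⁻ _, ENNReal.ofReal (1 - ε) ∂ν :=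
          lintegral_mono fun z => ENNReal.ofReal_le_ofReal (hple z)
      _ = ENNReal.ofReal (1 - ε) := by simp [hν.measure_univ]
  have hofReal_lt_one : ENNReal.ofReal (1 - ε) < 1 := by
    rw [← ENNReal.ofReal_one]
    exact (ENNReal.ofReal_lt_ofReal_iff one_pos).2 (by linarith)
  have hsB_lt : sB < 1 := lt_of_le_of_lt (hsble ν1 inferInstance) hofReal_lt_one
  have hsB'_lt : sB' < 1 := lt_of_le_of_lt (hsble ν1' inferInstance) hofReal_lt_one
  have hr0_le : r0 ≤ 1 := le_of_lt (lt_of_le_of_lt (hsble ν0 inferInstance) hofReal_lt_one)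
  have hr0'_le : r0' ≤ 1 := le_of_lt (lt_of_le_of_lt (hsble ν0' inferInstance) hofReal_lt_one)
  have hcB : B Set.univ = 1 - sB := hcB_eq ν1 inferInstance
  have hcB' : B' Set.univ = 1 - sB' := hcB_eq ν1' inferInstance
  have hBuniv_ne0 : B Set.univ ≠ 0 := by
    rw [hcB]
    simp only [ne_eq, tsub_eq_zero_iff_le, not_le]
    exact hsB_lt
  have hB'univ_ne0 : B' Set.univ ≠ 0 := by
    rw [hcB']
    simp only [ne_eq, tsub_eq_zero_iff_le, not_le]
    exact hsB'_lt
  have hBuniv_ne_top : B Set.univ ≠ ∞ := by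
    rw [hcB]; exact ne_top_of_le_ne_top ENNReal.one_ne_top tsub_le_self
  have hB'univ_ne_top : B' Set.univ ≠ ∞ := by
    rw [hcB']; exact ne_top_of_le_ne_top ENNReal.one_ne_top tsub_le_self
  set Bn : Measure (Torus d) := (B Set.univ)⁻¹ • B with hBndef
  set Bn' : Measure (Torus d) := (B' Set.univ)⁻¹ • B' with hBn'def
  haveI hBnP : IsProbabilityMeasure Bn := by
    constructor
    rw [hBndef, Measure.smul_apply, smul_eq_mul]
    exact ENNReal.inv_mul_cancel hBuniv_ne0 hBuniv_ne_top
  haveI hBn'P : IsProbabilityMeasure Bn' := by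
    constructor
    rw [hBn'def, Measure.smul_apply, smul_eq_mul]
    exact ENNReal.inv_mul_cancel hB'univ_ne0 hB'univ_ne_top
  -- killing probabilities
  set q0E : ℝ≥0∞ := ∫⁻ z, gm z ∂PA with hq0def
  set q1E : ℝ≥0∞ := ∫⁻ z, gm z ∂PB with hq1def
  have hgm_le_p1 : ∀ z : Torus d × Torus d, gm z ≤ g z.1 := fun z =>
    ENNReal.ofReal_le_ofReal (min_le_left _ _)
  have hq1_lt : q1E < 1 := by
    refine lt_of_le_of_lt ?_ hofReal_lt_one
    calc q1E ≤ ∫⁻ z, g z.1 ∂PB := lintegral_mono hgm_le_p1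
      _ = ∫⁻ z, g z ∂ν1 := by
          rw [← hPBfst, lintegral_map hgm measurable_fst]
      _ ≤ ENNReal.ofReal (1 - ε) := hsble ν1 inferInstance
  have hq0_le : q0E ≤ 1 := by
    calc q0E ≤ ∫⁻ _, 1 ∂PA := lintegral_mono fun z => by
          simp only [hgmdef]
          exact ENNReal.ofReal_le_one.2 (le_trans (min_le_left _ _) (hp1 _))
      _ = 1 := by simp
  set c1 : ℝ≥0∞ := 1 - q1E with hc1def
  have hc1_ne0 : c1 ≠ 0 := by
    simp only [hc1def, ne_eq, tsub_eq_zero_iff_le, not_le]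
    exact hq1_lt
  have hc1_ne_top : c1 ≠ ∞ := ne_top_of_le_ne_top ENNReal.one_ne_top tsub_le_self
  -- the coupling
  set ΓA : Measure (Torus d × Torus d) :=
   PA.withDensity g1 + ((PA.withDensity ga).map Prod.fst).prod Bn'
      + Bn.prod ((PA.withDensity gb).map Prod.snd) with hGAdef
  set ΓB : Measure (Torus d × Torus d) :=
   PB.withDensity g1 + ((PB.withDensity ga).map Prod.fst).prod Bn'
      + Bn.prod ((PB.withDensity gb).map Prod.snd) with hGBdef
  set Γreb : Measure (Torus d × Torus d) := c1⁻¹ • ΓB with hΓrebdef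
  set Γ : Measure (Torus d × Torus d) := ΓA + q0E • Γreb with hΓdef
  -- bounds on densities
  have hg1_le1 : ∀ z : Torus d × Torus d, g1 z ≤ 1 := fun z => by
    simp only [hg1def]
    exact ENNReal.ofReal_le_one.2 (by
      have := hp0 z.1
      have h2 := le_max_left (pkill lam γ z.1) (pkill lam γ z.2)
      linarith)
  have hga_le1 : ∀ z : Torus d × Torus d, ga z ≤ 1 := fun z => by
    simp only [hgadef]
    exact ENNReal.ofReal_le_one.2 (by
      have := hp0 z.1
      have := hp1 z.2
      linarith)
  have hgb_le1 : ∀ z : Torus d × Torus d, gb z ≤ 1 := fun z => by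
    simp only [hgbdef]
    exact ENNReal.ofReal_le_one.2 (by
      have := hp0 z.2
      have := hp1 z.1
      linarith)
  have hwd_fin : ∀ (pp : Measure (Torus d × Torus d)), IsProbabilityMeasure pp →
      ∀ (gc : Torus d × Torus d → ℝ≥0∞), (∀ z, gc z ≤ 1) →
        IsFiniteMeasure (pp.withDensity gc) := by
    intro pp hpp gc hgc
    apply isFiniteMeasure_withDensity
    apply ne_top_of_le_ne_top ENNReal.one_ne_top
    calc ∫⁻ z, gc z ∂pp ≤ ∫⁻ _, 1 ∂pp := lintegral_mono hgc
      _ = 1 := by simp [hpp.measure_univ]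
  have hmass_b : ∀ (pp : Measure (Torus d × Torus d)),
      ((pp.withDensity gb).map Prod.snd) Set.univ = ∫⁻ z, gb z ∂pp := by
    intro pp
    rw [Measure.map_apply measurable_snd MeasurableSet.univ, Set.preimage_univ,
      withDensity_apply _ MeasurableSet.univ, setLIntegral_univ]
  have hmass_a : ∀ (pp : Measure (Torus d × Torus d)),
      ((pp.withDensity ga).map Prod.fst) Set.univ = ∫⁻ z, ga z ∂pp := by
    intro pp
    rw [Measure.map_apply measurable_fst MeasurableSet.univ, Set.preimage_univ,
      withDensity_apply _ MeasurableSet.univ, setLIntegral_univ]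
  -- first marginal of each three-piece block
  have marg_fst : ∀ (pp : Measure (Torus d × Torus d)), IsProbabilityMeasure pp →
      ((pp.withDensity g1 + ((pp.withDensity ga).map Prod.fst).prod Bn'
        + Bn.prod ((pp.withDensity gb).map Prod.snd)).map Prod.fst)
      = (pp.map Prod.fst).withDensity f + (∫⁻ z, gb z ∂pp) • Bn := by
    intro pp hpp
    haveI := hpp
    haveI := hwd_fin pp hpp ga hga_le1
    haveI := hwd_fin pp hpp gb hgb_le1
    haveI : IsFiniteMeasure ((pp.withDensity ga).map Prod.fst) :=
      Measure.isFiniteMeasure_map _ _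
    haveI : IsFiniteMeasure ((pp.withDensity gb).map Prod.snd) :=
      Measure.isFiniteMeasure_map _ _
    rw [Measure.map_add _ _ measurable_fst, Measure.map_add _ _ measurable_fst,
      Measure.map_fst_prod, Measure.map_fst_prod, measure_univ, one_smul, hmass_b pp]
    congr 1
    rw [← Measure.map_add _ _ measurable_fst, ← withDensity_add_right _ hgam]
    have hptw : (g1 + ga) = fun z : Torus d × Torus d => f z.1 := by
      funext z
      simp only [Pi.add_apply, hg1def, hgadef, hfdef]
      exact ofReal_A1 (hp1 z.2)
    rw [hptw, map_fst_withDensity pp hfm]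
  have marg_snd : ∀ (pp : Measure (Torus d × Torus d)), IsProbabilityMeasure pp →
      ((pp.withDensity g1 + ((pp.withDensity ga).map Prod.fst).prod Bn'
        + Bn.prod ((pp.withDensity gb).map Prod.snd)).map Prod.snd)
      = (pp.map Prod.snd).withDensity f + (∫⁻ z, ga z ∂pp) • Bn' := by
    intro pp hpp
    haveI := hpp
    haveI := hwd_fin pp hpp ga hga_le1
    haveI := hwd_fin pp hpp gb hgb_le1
    haveI : IsFiniteMeasure ((pp.withDensity ga).map Prod.fst) :=
      Measure.isFiniteMeasure_map _ _
    haveI : IsFiniteMeasure ((pp.withDensity gb).map Prod.snd) :=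
      Measure.isFiniteMeasure_map _ _
    rw [Measure.map_add _ _ measurable_snd, Measure.map_add _ _ measurable_snd,
      Measure.map_snd_prod, Measure.map_snd_prod, hmass_a pp, measure_univ (μ := Bn), one_smul]
    rw [add_right_comm]
    congr 1
    rw [← Measure.map_add _ _ measurable_snd, ← withDensity_add_right _ hgbm]
    have hptw : (g1 + gb) = fun z : Torus d × Torus d => f z.2 := by
      funext z
      simp only [Pi.add_apply, hg1def, hgbdef, hfdef]
      rw [max_comm]
      exact ofReal_A1 (hp1 z.1)
    rw [hptw, map_snd_withDensity pp hfm]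
  -- mass identities for the rebirth normalization
  have hBuniv_eq : B Set.univ = ∫⁻ z : Torus d × Torus d, f z.1 ∂PB := by
    rw [hBdef, withDensity_apply _ MeasurableSet.univ, setLIntegral_univ,
      ← hPBfst, lintegral_map hfm measurable_fst]
  have hB'univ_eq : B' Set.univ = ∫⁻ z : Torus d × Torus d, f z.2 ∂PB := by
    rw [hB'def, withDensity_apply _ MeasurableSet.univ, setLIntegral_univ,
      ← hPBsnd, lintegral_map hfm measurable_snd]
  have hminm : Measurable fun z : Torus d × Torus d =>
      ENNReal.ofReal (1 - min (pkill lam γ z.1) (pkill lam γ z.2)) :=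
    (measurable_const.sub (hp1m.min hp2m)).ennreal_ofReal
  have hmin_int : (∫⁻ z : Torus d × Torus d,
      ENNReal.ofReal (1 - min (pkill lam γ z.1) (pkill lam γ z.2)) ∂PB) = c1 := by
    rw [hc1def]
    refine ENNReal.eq_sub_of_add_eq (ne_top_of_le_ne_top ENNReal.one_ne_top hq1_lt.le) ?_
    rw [hq1def, ← lintegral_add_left hminm]
    have hptw : ∀ z : Torus d × Torus d,
        ENNReal.ofReal (1 - min (pkill lam γ z.1) (pkill lam γ z.2)) + gm z = 1 := by
      intro z
      simp only [hgmdef]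
      exact ofReal_A6 (le_min (hp0 z.1) (hp0 z.2)) (le_trans (min_le_left _ _) (hp1 z.1))
    rw [lintegral_congr hptw]
    simp
  have hkey1 : B Set.univ + (∫⁻ z, gb z ∂PB) = c1 := by
    have hfc1 : Measurable fun z : Torus d × Torus d => f z.1 := hfm.comp measurable_fst
    rw [hBuniv_eq, ← lintegral_add_left hfc1, ← hmin_int]
    refine lintegral_congr fun z => ?_
    simp only [hfdef, hgbdef]
    exact ofReal_A5 (hp1 z.1)
  have hkey1' : B' Set.univ + (∫⁻ z, ga z ∂PB) = c1 := by
    have hfc2 : Measurable fun z : Torus d × Torus d => f z.2 := hfm.comp measurable_snd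
    rw [hB'univ_eq, ← lintegral_add_left hfc2, ← hmin_int]
    refine lintegral_congr fun z => ?_
    simp only [hfdef, hgadef]
    rw [ofReal_A5 (hp1 z.2), min_comm]
  have hBsmul : B = (B Set.univ) • Bn := by
    rw [hBndef, smul_smul, ENNReal.mul_inv_cancel hBuniv_ne0 hBuniv_ne_top, one_smul]
  have hB'smul : B' = (B' Set.univ) • Bn' := by
    rw [hBn'def, smul_smul, ENNReal.mul_inv_cancel hB'univ_ne0 hB'univ_ne_top, one_smul]
  -- marginals of the rebirth coupling
  have hrebfst : Γreb.map Prod.fst = Bn := by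
    rw [hΓrebdef, Measure.map_smul, hGBdef, marg_fst PB inferInstance, hPBfst, ← hBdef,
      hBsmul, ← add_smul, hkey1, smul_smul, ENNReal.inv_mul_cancel hc1_ne0 hc1_ne_top,
      one_smul]
  have hrebsnd : Γreb.map Prod.snd = Bn' := by
    rw [hΓrebdef, Measure.map_smul, hGBdef, marg_snd PB inferInstance, hPBsnd, ← hB'def,
      hB'smul, ← add_smul, hkey1', smul_smul, ENNReal.inv_mul_cancel hc1_ne0 hc1_ne_top,
      one_smul]
  -- total killing mass identities
  have hr0_eq : (∫⁻ z, gb z ∂PA) + q0E = r0 := by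
    rw [hq0def, ← lintegral_add_left hgbm]
    have hptw : ∀ z : Torus d × Torus d, gb z + gm z = g z.1 := by
      intro z
      simp only [hgbdef, hgmdef, hgdef]
      exact ofReal_A3 (hp0 z.2)
    rw [lintegral_congr hptw, hr0def, ← hPAfst, lintegral_map hgm measurable_fst]
  have hr0'_eq : (∫⁻ z, ga z ∂PA) + q0E = r0' := by
    rw [hq0def, ← lintegral_add_left hgam]
    have hptw : ∀ z : Torus d × Torus d, ga z + gm z = g z.2 := by
      intro z
      simp only [hgadef, hgmdef, hgdef]
      rw [min_comm]
      exact ofReal_A3 (hp0 z.1)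
    rw [lintegral_congr hptw, hr0'def, ← hPAsnd, lintegral_map hgm measurable_snd]
  -- marginals of the full coupling
  have hΓfst : Γ.map Prod.fst = μ0.bind (Qker b lam γ μ1) := by
    rw [hΓdef, Measure.map_add _ _ measurable_fst, Measure.map_smul, hrebfst, hGAdef,
      marg_fst PA inferInstance, hPAfst, add_assoc, ← add_smul, hr0_eq]
    rw [bind_Qker hbm hpm μ0 μ1]
    rw [hBndef, smul_smul]
    rw [show (μ0.bind (eulerK b γ)).withDensity
        (fun z => ENNReal.ofReal (1 - pkill lam γ z)) = ν0.withDensity f from rfl]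
    rw [show (∫⁻ z, ENNReal.ofReal (pkill lam γ z) ∂(μ0.bind (eulerK b γ)))
        * (1 - ∫⁻ z, ENNReal.ofReal (pkill lam γ z) ∂(μ1.bind (eulerK b γ)))⁻¹
        = r0 * (1 - sB)⁻¹ from rfl]
    rw [show (μ1.bind (eulerK b γ)).withDensity
        (fun z => ENNReal.ofReal (1 - pkill lam γ z)) = B from rfl]
    rw [hcB]
  have hΓsnd : Γ.map Prod.snd = μ0'.bind (Qker b lam γ μ1') := by
    rw [hΓdef, Measure.map_add _ _ measurable_snd, Measure.map_smul, hrebsnd, hGAdef,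
      marg_snd PA inferInstance, hPAsnd, add_assoc, ← add_smul, hr0'_eq]
    rw [bind_Qker hbm hpm μ0' μ1']
    rw [hBn'def, smul_smul]
    rw [show (μ0'.bind (eulerK b γ)).withDensity
        (fun z => ENNReal.ofReal (1 - pkill lam γ z)) = ν0'.withDensity f from rfl]
    rw [show (∫⁻ z, ENNReal.ofReal (pkill lam γ z) ∂(μ0'.bind (eulerK b γ)))
        * (1 - ∫⁻ z, ENNReal.ofReal (pkill lam γ z) ∂(μ1'.bind (eulerK b γ)))⁻¹
        = r0' * (1 - sB')⁻¹ from rfl]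
    rw [show (μ1'.bind (eulerK b γ)).withDensity
        (fun z => ENNReal.ofReal (1 - pkill lam γ z)) = B' from rfl]
    rw [hcB']
  -- Γ is a probability measure
  haveI hΓP : IsProbabilityMeasure Γ := by
    constructor
    have h1 : Γ Set.univ = (Γ.map Prod.fst) Set.univ := by
      rw [Measure.map_apply measurable_fst MeasurableSet.univ, Set.preimage_univ]
    rw [h1, hΓfst, bind_Qker hbm hpm μ0 μ1]
    rw [show (μ0.bind (eulerK b γ)).withDensity
        (fun z => ENNReal.ofReal (1 - pkill lam γ z)) = ν0.withDensity f from rfl]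
    rw [show (∫⁻ z, ENNReal.ofReal (pkill lam γ z) ∂(μ0.bind (eulerK b γ)))
        * (1 - ∫⁻ z, ENNReal.ofReal (pkill lam γ z) ∂(μ1.bind (eulerK b γ)))⁻¹
        = r0 * (1 - sB)⁻¹ from rfl]
    rw [show (μ1.bind (eulerK b γ)).withDensity
        (fun z => ENNReal.ofReal (1 - pkill lam γ z)) = B from rfl]
    rw [Measure.coe_add, Pi.add_apply, Measure.smul_apply, smul_eq_mul,
      hcB_eq ν0 inferInstance, hcB, mul_assoc,
      ENNReal.inv_mul_cancel (by simp only [ne_eq, tsub_eq_zero_iff_le, not_le]; exact hsB_lt)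
        (ne_top_of_le_ne_top ENNReal.one_ne_top tsub_le_self), mul_one]
    exact tsub_add_cancel_of_le hr0_le
  -- cost integrals
  set LA : ℝ≥0∞ := ∫⁻ z, R z ∂PA with hLAdef
  set LB : ℝ≥0∞ := ∫⁻ z, R z ∂PB with hLBdef
  have hLbdd : ∀ pp : Measure (Torus d × Torus d), IsProbabilityMeasure pp →
      (∫⁻ z, R z ∂pp) ≤ ENNReal.ofReal a⁻¹ := by
    intro pp hpp
    calc ∫⁻ z, R z ∂pp ≤ ∫⁻ _, ENNReal.ofReal a⁻¹ ∂pp := lintegral_mono hRle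
      _ = ENNReal.ofReal a⁻¹ := by simp [hpp.measure_univ]
  have hLA_fin : LA ≠ ∞ := ne_top_of_le_ne_top ENNReal.ofReal_ne_top (hLbdd PA inferInstance)
  have hLB_fin : LB ≠ ∞ := ne_top_of_le_ne_top ENNReal.ofReal_ne_top (hLbdd PB inferInstance)
  have hcost : ∀ pp : Measure (Torus d × Torus d), IsProbabilityMeasure pp →
      (∫⁻ z, R z ∂(pp.withDensity g1 + ((pp.withDensity ga).map Prod.fst).prod Bn'
        + Bn.prod ((pp.withDensity gb).map Prod.snd)))
      ≤ ENNReal.ofReal hh * ∫⁻ z, R z ∂pp := by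
    intro pp hpp
    rw [lintegral_add_measure, lintegral_add_measure]
    have t1 : ∫⁻ z, R z ∂(pp.withDensity g1)
        ≤ ENNReal.ofReal (1 - mI) * ∫⁻ z, R z ∂pp := by
      rw [lintegral_withDensity_eq_lintegral_mul _ hg1m hRm,
        ← lintegral_const_mul _ hRm]
      refine lintegral_mono fun z => ?_
      have h4 : g1 z ≤ ENNReal.ofReal (1 - mI) := by
        simp only [hg1def]
        apply ENNReal.ofReal_le_ofReal
        have h2 := hmI_le z.1
        have h3 := le_max_left (pkill lam γ z.1) (pkill lam γ z.2)
        linarith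
      exact mul_le_mul_left h4 (R z)
    have t2 : ∫⁻ z, R z ∂(((pp.withDensity ga).map Prod.fst).prod Bn')
        ≤ ENNReal.ofReal a⁻¹ * ∫⁻ z, ga z ∂pp := by
      calc ∫⁻ z, R z ∂(((pp.withDensity ga).map Prod.fst).prod Bn')
          ≤ ∫⁻ _, ENNReal.ofReal a⁻¹ ∂(((pp.withDensity ga).map Prod.fst).prod Bn') :=
            lintegral_mono hRle
        _ = ENNReal.ofReal a⁻¹ * ∫⁻ z, ga z ∂pp := by
            rw [lintegral_const, ← Set.univ_prod_univ, Measure.prod_prod, hmass_a pp,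
              measure_univ (μ := Bn'), mul_one]
    have t3 : ∫⁻ z, R z ∂(Bn.prod ((pp.withDensity gb).map Prod.snd))
        ≤ ENNReal.ofReal a⁻¹ * ∫⁻ z, gb z ∂pp := by
      calc ∫⁻ z, R z ∂(Bn.prod ((pp.withDensity gb).map Prod.snd))
          ≤ ∫⁻ _, ENNReal.ofReal a⁻¹ ∂(Bn.prod ((pp.withDensity gb).map Prod.snd)) :=
            lintegral_mono hRle
        _ = ENNReal.ofReal a⁻¹ * ∫⁻ z, gb z ∂pp := by
            rw [lintegral_const, ← Set.univ_prod_univ, Measure.prod_prod, hmass_b pp,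
              measure_univ (μ := Bn), one_mul]
    have t4 : ENNReal.ofReal a⁻¹ * ∫⁻ z, ga z ∂pp + ENNReal.ofReal a⁻¹ * ∫⁻ z, gb z ∂pp
        ≤ ENNReal.ofReal c2 * ∫⁻ z, R z ∂pp := by
      rw [← mul_add, ← lintegral_add_left hgam]
      have h5 : ∫⁻ z, (ga z + gb z) ∂pp
          ≤ ENNReal.ofReal (γ * L * β⁻¹) * ∫⁻ z, R z ∂pp := by
        rw [← lintegral_const_mul _ hRm]
        refine lintegral_mono fun z => ?_
        have h6 : ga z + gb z = ENNReal.ofReal |pkill lam γ z.1 - pkill lam γ z.2| := by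
          simp only [hgadef, hgbdef]
          exact ofReal_abs'
        rw [h6, hRdef, ← ENNReal.ofReal_mul (by positivity)]
        exact ENNReal.ofReal_le_ofReal (hpt z.1 z.2)
      calc ENNReal.ofReal a⁻¹ * ∫⁻ z, (ga z + gb z) ∂pp
          ≤ ENNReal.ofReal a⁻¹ * (ENNReal.ofReal (γ * L * β⁻¹) * ∫⁻ z, R z ∂pp) :=
            mul_le_mul_right h5 _
        _ = ENNReal.ofReal c2 * ∫⁻ z, R z ∂pp := by
            rw [← mul_assoc, ← ENNReal.ofReal_mul (by positivity)]
            congr 2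
            rw [hc2def, mul_inv]
            ring
    calc ∫⁻ z, R z ∂(pp.withDensity g1)
          + ∫⁻ z, R z ∂(((pp.withDensity ga).map Prod.fst).prod Bn')
          + ∫⁻ z, R z ∂(Bn.prod ((pp.withDensity gb).map Prod.snd))
        ≤ ENNReal.ofReal (1 - mI) * ∫⁻ z, R z ∂pp
          + (ENNReal.ofReal a⁻¹ * ∫⁻ z, ga z ∂pp + ENNReal.ofReal a⁻¹ * ∫⁻ z, gb z ∂pp) := by
          rw [add_assoc]
          exact add_le_add t1 (add_le_add t2 t3)
      _ ≤ ENNReal.ofReal (1 - mI) * ∫⁻ z, R z ∂pp + ENNReal.ofReal c2 * ∫⁻ z, R z ∂pp :=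
          add_le_add_right t4 _
      _ = ENNReal.ofReal hh * ∫⁻ z, R z ∂pp := by
          rw [← add_mul, ← ENNReal.ofReal_add (by linarith) hc2, hhdef]
  have hcostA : ∫⁻ z, R z ∂ΓA ≤ ENNReal.ofReal hh * LA := by
    rw [hGAdef]; exact hcost PA inferInstance
  have hcostB : ∫⁻ z, R z ∂ΓB ≤ ENNReal.ofReal hh * LB := by
    rw [hGBdef]; exact hcost PB inferInstance
  have hcostreb : ∫⁻ z, R z ∂Γreb ≤ c1⁻¹ * (ENNReal.ofReal hh * LB) := by
    rw [hΓrebdef, lintegral_smul_measure]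
    exact mul_le_mul_right hcostB _
  have hCle : ∫⁻ z, R z ∂Γ
      ≤ ENNReal.ofReal hh * LA + q0E * (c1⁻¹ * (ENNReal.ofReal hh * LB)) := by
    rw [hΓdef, lintegral_add_measure, lintegral_smul_measure]
    exact add_le_add hcostA (mul_le_mul_right hcostreb _)
  -- identification of the killing probabilities
  have hFm : Measurable fun v : Torus d × Torus d =>
      min (pkill lam γ v.1) (pkill lam γ v.2) := hp1m.min hp2m
  have hF1 : ∀ v : Torus d × Torus d, min (pkill lam γ v.1) (pkill lam γ v.2) ≤ 1 :=
    fun v => le_trans (min_le_left _ _) (hp1 _)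
  have hq0P : P {ω | U ω < min (pkill lam γ (X0 ω)) (pkill lam γ (X0' ω))} = q0E := by
    have hind0 : IndepFun (fun ω => (X0 ω, X0' ω)) U P := by
      have hφ : Measurable fun q : Torus d × (Torus d × (Torus d × Torus d)) =>
          (q.1, q.2.1) := measurable_fst.prodMk (measurable_fst.comp measurable_snd)
      exact hindepU.comp hφ measurable_id
    exact unif_lt_prob (hX0m.prodMk hX0'm) hUm hU hind0 hFm hF1
  have hq1P : P {ω | U ω < min (pkill lam γ (X1 ω)) (pkill lam γ (X1' ω))} = q1E := by
    have hind1 : IndepFun (fun ω => (X1 ω, X1' ω)) U P := by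
      have hφ : Measurable fun q : Torus d × (Torus d × (Torus d × Torus d)) =>
          q.2.2 := measurable_snd.comp measurable_snd
      exact hindepU.comp hφ measurable_id
    exact unif_lt_prob (hX1m.prodMk hX1'm) hUm hU hind1 hFm hF1
  -- identification of the expected costs
  have hE0 : ∫ ω, rho a (X0 ω) (X0' ω) ∂P = LA.toReal := by
    have h1 : ∫ ω, rho a (X0 ω) (X0' ω) ∂P = ∫ z : Torus d × Torus d, rho a z.1 z.2 ∂PA := by
      rw [hPAdef, integral_map (hX0m.prodMk hX0'm).aemeasurable hρcont.aestronglyMeasurable]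
    rw [h1, integral_eq_lintegral_of_nonneg_ae (Filter.Eventually.of_forall fun z => rho_nonneg ha)
      hρcont.aestronglyMeasurable]
  have hE1 : ∫ ω, rho a (X1 ω) (X1' ω) ∂P = LB.toReal := by
    have h1 : ∫ ω, rho a (X1 ω) (X1' ω) ∂P = ∫ z : Torus d × Torus d, rho a z.1 z.2 ∂PB := by
      rw [hPBdef, integral_map (hX1m.prodMk hX1'm).aemeasurable hρcont.aestronglyMeasurable]
    rw [h1, integral_eq_lintegral_of_nonneg_ae (Filter.Eventually.of_forall fun z => rho_nonneg ha)
      hρcont.aestronglyMeasurable]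
  -- the Wasserstein bound
  have hW : Wass (rho a) (μ0.bind (Qker b lam γ μ1)) (μ0'.bind (Qker b lam γ μ1'))
      ≤ ∫ z : Torus d × Torus d, rho a z.1 z.2 ∂Γ :=
    Wass_le_of_coupling (fun z w => rho_nonneg ha) ⟨hΓP, hΓfst, hΓsnd⟩
  have hint : ∫ z : Torus d × Torus d, rho a z.1 z.2 ∂Γ = (∫⁻ z, R z ∂Γ).toReal := by
    rw [integral_eq_lintegral_of_nonneg_ae (Filter.Eventually.of_forall fun z => rho_nonneg ha)
      hρcont.aestronglyMeasurable]
  -- finiteness of the bound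
  have hq0_fin : q0E ≠ ∞ := ne_top_of_le_ne_top ENNReal.one_ne_top hq0_le
  have hq1_fin : q1E ≠ ∞ := ne_top_of_le_ne_top ENNReal.one_ne_top hq1_lt.le
  have hb1_fin : ENNReal.ofReal hh * LA ≠ ∞ :=
    ENNReal.mul_ne_top ENNReal.ofReal_ne_top hLA_fin
  have hb2_fin : q0E * (c1⁻¹ * (ENNReal.ofReal hh * LB)) ≠ ∞ :=
    ENNReal.mul_ne_top hq0_fin (ENNReal.mul_ne_top (ENNReal.inv_ne_top.2 hc1_ne0)
      (ENNReal.mul_ne_top ENNReal.ofReal_ne_top hLB_fin))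
  have hbound_fin : ENNReal.ofReal hh * LA + q0E * (c1⁻¹ * (ENNReal.ofReal hh * LB)) ≠ ∞ :=
    ENNReal.add_ne_top.2 ⟨hb1_fin, hb2_fin⟩
  -- final computation
  rw [hq0P, hq1P, hE0, hE1]
  refine le_trans hW ?_
  rw [hint]
  refine le_trans (ENNReal.toReal_mono hbound_fin hCle) ?_
  have hbt : (ENNReal.ofReal hh * LA + q0E * (c1⁻¹ * (ENNReal.ofReal hh * LB))).toReal
      = hh * LA.toReal + q0E.toReal * ((1 - q1E.toReal)⁻¹ * (hh * LB.toReal)) := by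
    rw [ENNReal.toReal_add hb1_fin hb2_fin, ENNReal.toReal_mul, ENNReal.toReal_mul,
      ENNReal.toReal_mul, ENNReal.toReal_mul, ENNReal.toReal_inv,
      ENNReal.toReal_ofReal hh0, hc1def,
      ENNReal.toReal_sub_of_le hq1_lt.le ENNReal.one_ne_top, ENNReal.toReal_one]
  rw [hbt]
  apply le_of_eq
  ring

end
end
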